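/- arXiv:1106.5756 — 4 statements merged into one kernel-verified Lean document; each statement's English description precedes it below -/
import Mathlib

section
/- (Lemma 2(i)) Let ρ = |ψ₁⟩⟨ψ₁| ⊗ |ψ₂⟩⟨ψ₂| ⊗ |ψ₃⟩⟨ψ₃| be a fully product pure 3-qubit state with full correlation tensor T_{i₁i₂i₃} = tr(ρ (σ_{i₁} ⊗ σ_{i₂} ⊗ σ_{i₃})), i_j ∈ {1,2,3}. Then for each j ∈ {1,2,3}, the j-matricization of T satisfies ‖T_{\underline{j}}‖_k ≤ 1 for every k. -/
open Matrix BigOperators ComplexOrder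

noncomputable section

/-- The three standard Pauli matrices. -/
def pauli : Fin 3 → Matrix (Fin 2) (Fin 2) ℂ :=
  ![!![0, 1; 1, 0], !![0, -Complex.I; Complex.I, 0], !![1, 0; 0, -1]]

/-- The tensor (Kronecker) product of `n` local operators, acting on
`(ℂ²)^{⊗n}` with the Hilbert space indexed by functions `Fin n → Fin 2`. -/
def tensorOp {n : ℕ} (A : Fin n → Matrix (Fin 2) (Fin 2) ℂ) :
    Matrix (Fin n → Fin 2) (Fin n → Fin 2) ℂ :=
  fun r c => ∏ j, A j (r j) (c j)

/-- The full correlation tensor of an `n`-qubit state: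
`T_{i₁⋯i_n} = tr(ρ (σ_{i₁} ⊗ ⋯ ⊗ σ_{i_n}))`. -/
def corr {n : ℕ} (ρ : Matrix (Fin n → Fin 2) (Fin n → Fin 2) ℂ)
    (f : Fin n → Fin 3) : ℝ :=
  ((ρ * tensorOp fun j => pauli (f j)).trace).re

/-- The `A`-matricization of an `n`-index tensor `v`: the real matrix whose row
index collects the indices in `A` and whose column index collects the remaining
indices. -/
def matricize {n m : ℕ} (A : Finset (Fin n)) (v : (Fin n → Fin m) → ℝ) :
    Matrix ({j // j ∈ A} → Fin m) ({j // j ∉ A} → Fin m) ℝ :=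
  fun r c => v fun j => if h : j ∈ A then r ⟨j, h⟩ else c ⟨j, h⟩

/-- The singular values of a real matrix `M`: the square roots of the
eigenvalues of `MᵀM = MᴴM`. -/
def singVals {I J : Type*} [Fintype I] [Fintype J] [DecidableEq J]
    (M : Matrix I J ℝ) : J → ℝ :=
  fun j => Real.sqrt ((Matrix.posSemidef_conjTranspose_mul_self M).1.eigenvalues j)

/-- The Ky Fan `k` norm: the maximum, over sets of `k` of the singular values,
of their sum — equivalently, the sum of the `k` largest singular values. -/
def kyFanNorm {I J : Type*} [Fintype I] [Fintype J] [DecidableEq J]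
    (k : ℕ) (M : Matrix I J ℝ) : ℝ :=
  (Finset.univ : Finset (Finset J)).sup' ⟨∅, Finset.mem_univ ∅⟩
    fun s => if s.card = k then ∑ j ∈ s, singVals M j else 0

/-- The trace norm: the sum of all singular values. -/
def traceNorm {I J : Type*} [Fintype I] [Fintype J] [DecidableEq J]
    (M : Matrix I J ℝ) : ℝ :=
  ∑ j, singVals M j

/-! ### Auxiliary lemmas -/

lemma aux_trace_eq_sum_eig {n : Type*} [Fintype n] [DecidableEq n] {A : Matrix n n ℝ}
    (hA : A.IsHermitian) : A.trace = ∑ i, hA.eigenvalues i := by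
  conv_lhs => rw [hA.spectral_theorem, Unitary.conjStarAlgAut_apply]
  rw [Matrix.trace_mul_cycle, Matrix.mem_unitaryGroup_iff'.mp (hA.eigenvectorUnitary).2]
  simp [Matrix.trace_diagonal]

lemma aux_trace_sq_eq_sum_eig_sq {n : Type*} [Fintype n] [DecidableEq n] {A : Matrix n n ℝ}
    (hA : A.IsHermitian) : (A * A).trace = ∑ i, hA.eigenvalues i ^ 2 := by
  set U : Matrix n n ℝ := (hA.eigenvectorUnitary : Matrix n n ℝ) with hU
  set D : Matrix n n ℝ := diagonal (RCLike.ofReal ∘ hA.eigenvalues) with hD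
  have hsU : star U * U = 1 := Matrix.mem_unitaryGroup_iff'.mp (hA.eigenvectorUnitary).2
  have h2 : A * A = U * (D * D) * star U := by
    conv_lhs => rw [hA.spectral_theorem]
    calc U * D * star U * (U * D * star U)
        = U * (D * ((star U * U) * (D * star U))) := by
          simp only [Matrix.mul_assoc]
      _ = U * (D * D) * star U := by rw [hsU, Matrix.one_mul]; simp only [Matrix.mul_assoc]
  rw [h2, Matrix.trace_mul_cycle, ← Matrix.mul_assoc, hsU, Matrix.one_mul, hD,
    Matrix.diagonal_mul_diagonal, Matrix.trace_diagonal]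
  simp [sq]

/-- Ky Fan norms of a rank-one real matrix with Frobenius norm at most `1` are at most `1`. -/
lemma aux_kyFan_vecMulVec_le {I J : Type*} [Fintype I] [Fintype J] [DecidableEq J]
    (u : I → ℝ) (w : J → ℝ) (h : (∑ i, u i ^ 2) * (∑ j, w j ^ 2) ≤ 1) (k : ℕ) :
    kyFanNorm k (Matrix.vecMulVec u w) ≤ 1 := by
  unfold kyFanNorm singVals
  set M := Matrix.vecMulVec u w with hM
  set hP := Matrix.posSemidef_conjTranspose_mul_self M with hPdef
  set lam := hP.1.eigenvalues with hlam
  have hnn : ∀ j, 0 ≤ lam j := fun j => hP.eigenvalues_nonneg j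
  have hNapp : ∀ j j', (Mᴴ * M) j j' = (∑ i, u i ^ 2) * (w j * w j') := by
    intro j j'
    simp only [Matrix.mul_apply, Matrix.conjTranspose_apply, hM, Matrix.vecMulVec_apply,
      star_trivial]
    calc ∑ x, u x * w j * (u x * w j') = ∑ x, u x ^ 2 * (w j * w j') :=
          Finset.sum_congr rfl fun i _ => by ring
      _ = (∑ i, u i ^ 2) * (w j * w j') := by rw [← Finset.sum_mul]
  have htr : (Mᴴ * M).trace = (∑ i, u i ^ 2) * (∑ j, w j ^ 2) := by
    rw [Matrix.trace]
    simp only [Matrix.diag_apply, hNapp]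
    rw [← Finset.mul_sum]
    congr 1
    exact Finset.sum_congr rfl fun j _ => (sq (w j)).symm
  have htr2 : ((Mᴴ * M) * (Mᴴ * M)).trace = ((∑ i, u i ^ 2) * (∑ j, w j ^ 2)) ^ 2 := by
    rw [Matrix.trace]
    simp only [Matrix.diag_apply, Matrix.mul_apply, hNapp]
    rw [Finset.sum_comm]
    have : ∀ j', ∑ j, (∑ i, u i ^ 2) * (w j * w j') * ((∑ i, u i ^ 2) * (w j' * w j))
        = (∑ i, u i ^ 2)^2 * (∑ j, w j ^2) * w j' ^ 2 := by
      intro j'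
      rw [Finset.sum_congr rfl (fun j _ => show _ = ((∑ i, u i ^ 2)^2 * w j' ^2) * w j ^2 by ring),
        ← Finset.mul_sum]
      ring
    rw [Finset.sum_congr rfl fun j' _ => this j', ← Finset.mul_sum]
    ring
  have hsum : ∑ j, lam j = (∑ i, u i ^ 2) * (∑ j, w j ^ 2) := by
    rw [← htr]; exact (aux_trace_eq_sum_eig hP.1).symm
  have hsumsq : ∑ j, lam j ^ 2 = ((∑ i, u i ^ 2) * (∑ j, w j ^ 2)) ^ 2 := by
    rw [← htr2]; exact (aux_trace_sq_eq_sum_eig_sq hP.1).symm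
  have hoff : ∀ j j', j ≠ j' → lam j * lam j' = 0 := by
    have hexp : (∑ j, lam j) ^ 2 = ∑ j, lam j ^ 2 +
        ∑ j, ∑ j' ∈ Finset.univ.erase j, lam j * lam j' := by
      rw [sq, Finset.sum_mul_sum, ← Finset.sum_add_distrib]
      apply Finset.sum_congr rfl
      intro j _
      rw [← Finset.add_sum_erase _ _ (Finset.mem_univ j), sq]
    have h0 : ∑ j, ∑ j' ∈ Finset.univ.erase j, lam j * lam j' = 0 := by
      have := hexp
      rw [hsum, hsumsq] at this
      linarith
    intro j j' hne
    have h1 : ∀ j ∈ Finset.univ, (0:ℝ) ≤ ∑ j' ∈ Finset.univ.erase j, lam j * lam j' :=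
      fun j _ => Finset.sum_nonneg fun j' _ => mul_nonneg (hnn j) (hnn j')
    have h2 := (Finset.sum_eq_zero_iff_of_nonneg h1).mp h0 j (Finset.mem_univ j)
    have h3 : ∀ j' ∈ Finset.univ.erase j, (0:ℝ) ≤ lam j * lam j' :=
      fun j' _ => mul_nonneg (hnn j) (hnn j')
    exact (Finset.sum_eq_zero_iff_of_nonneg h3).mp h2 j'
      (Finset.mem_erase.mpr ⟨hne.symm, Finset.mem_univ j'⟩)
  have hkey : ∀ s : Finset J, ∑ j ∈ s, Real.sqrt (lam j) ≤ 1 := by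
    intro s
    have hsq : (∑ j ∈ s, Real.sqrt (lam j)) ^ 2 = ∑ j ∈ s, lam j := by
      rw [sq, Finset.sum_mul_sum]
      rw [Finset.sum_congr rfl (fun j hj => Finset.sum_congr rfl
        (fun j' hj' => show Real.sqrt (lam j) * Real.sqrt (lam j')
            = if j' = j then lam j else 0 by
          split_ifs with hh
          · rw [hh]; exact Real.mul_self_sqrt (hnn j)
          · rw [← Real.sqrt_mul (hnn j), hoff j j' (fun hc => hh hc.symm), Real.sqrt_zero]))]
      simp
    have hle : ∑ j ∈ s, lam j ≤ 1 := by
      calc ∑ j ∈ s, lam j ≤ ∑ j, lam j :=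
            Finset.sum_le_sum_of_subset_of_nonneg (Finset.subset_univ s)
              (fun j _ _ => hnn j)
        _ ≤ 1 := by rw [hsum]; exact h
    nlinarith [Finset.sum_nonneg (s := s)
      (f := fun j => Real.sqrt (lam j)) (fun j _ => Real.sqrt_nonneg (lam j))]
  apply Finset.sup'_le
  intro s _
  split_ifs
  · exact hkey s
  · norm_num

/-- The (complex-valued) Bloch component `⟨ψ|σ_i|ψ⟩`. -/
def blochC (ψ : Fin 2 → ℂ) (i : Fin 3) : ℂ :=
  ∑ x, ∑ y, (starRingEnd ℂ) (ψ x) * pauli i x y * ψ y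

/-- The (real) Bloch component of a qubit state. -/
def bloch (ψ : Fin 2 → ℂ) (i : Fin 3) : ℝ := (blochC ψ i).re

lemma aux_blochC_real (ψ : Fin 2 → ℂ) (i : Fin 3) : blochC ψ i = ((bloch ψ i : ℝ) : ℂ) := by
  fin_cases i <;>
  · simp only [blochC, bloch, pauli, Fin.sum_univ_succ, Fin.sum_univ_zero]
    simp [Complex.ext_iff, Complex.add_re, Complex.add_im, Complex.mul_re, Complex.mul_im]
    ring

lemma aux_bloch_norm (ψ : Fin 2 → ℂ) (h : ∑ x, Complex.normSq (ψ x) = 1) :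
    ∑ i, bloch ψ i ^ 2 = 1 := by
  simp only [Fin.sum_univ_two, Fin.sum_univ_three, Complex.normSq_apply] at h ⊢
  simp only [bloch, blochC, pauli, Fin.sum_univ_two, Fin.sum_univ_three]
  simp [Complex.add_re, Complex.mul_re, Complex.mul_im]
  linear_combination (((ψ 0).re^2 + (ψ 0).im^2 + (ψ 1).re^2 + (ψ 1).im^2) + 1) * h

set_option maxHeartbeats 1000000 in
lemma aux_sum_sum_prod (F : Fin 3 → Fin 2 → Fin 2 → ℂ) :
    ∑ c : Fin 3 → Fin 2, ∑ r : Fin 3 → Fin 2, ∏ j, F j (c j) (r j)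
      = ∏ j, ∑ x, ∑ y, F j x y := by
  have h1 : (∏ j, ∑ x, ∑ y, F j x y) = ∏ j, ∑ q : Fin 2 × Fin 2, F j q.1 q.2 :=
    Finset.prod_congr rfl fun j _ => (Fintype.sum_prod_type' (f := fun (x y : Fin 2) => F j x y)).symm
  rw [h1, Fintype.prod_sum]
  calc ∑ c : Fin 3 → Fin 2, ∑ r : Fin 3 → Fin 2, ∏ j, F j (c j) (r j)
      = ∑ p : (Fin 3 → Fin 2) × (Fin 3 → Fin 2), ∏ j, F j (p.1 j) (p.2 j) :=
        (Fintype.sum_prod_type' (f := fun (c r : Fin 3 → Fin 2) => ∏ j, F j (c j) (r j))).symm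
    _ = ∑ x : Fin 3 → Fin 2 × Fin 2, ∏ j, F j (x j).1 (x j).2 :=
        Fintype.sum_equiv (Equiv.arrowProdEquivProdArrow (Fin 3) (fun _ => Fin 2) (fun _ => Fin 2)).symm
          (fun p : ((Fin 3 → Fin 2) × (Fin 3 → Fin 2)) => ∏ j, F j (p.1 j) (p.2 j))
          (fun x : (Fin 3 → Fin 2 × Fin 2) => ∏ j, F j (x j).1 (x j).2)
          (fun p => rfl)

/-- Lemma 2(i): For a fully product pure 3-qubit state
`ρ = |ψ₁⟩⟨ψ₁| ⊗ |ψ₂⟩⟨ψ₂| ⊗ |ψ₃⟩⟨ψ₃|`, every `j`-matricization of the full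
correlation tensor satisfies `‖T_{j̲}‖_k ≤ 1` for every `k`. -/
theorem fully_product_three_qubit_matricization_bound
    (ψ : Fin 3 → Fin 2 → ℂ)
    (hψ : ∀ j, ∑ x, Complex.normSq (ψ j x) = 1)
    (ρ : Matrix (Fin 3 → Fin 2) (Fin 3 → Fin 2) ℂ)
    (hρ : ρ = Matrix.vecMulVec (fun r => ∏ j, ψ j (r j))
        (star fun r => ∏ j, ψ j (r j))) :
    ∀ (j : Fin 3) (k : ℕ),
      kyFanNorm k (matricize {j} (corr ρ)) ≤ 1 := by
  -- the correlation tensor factorizes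
  have hcorr : ∀ f : Fin 3 → Fin 3, corr ρ f = ∏ m, bloch (ψ m) (f m) := by
    intro f
    have htr : (ρ * tensorOp fun m => pauli (f m)).trace
        = ∏ m, blochC (ψ m) (f m) := by
      have hb : (∏ m, blochC (ψ m) (f m))
          = ∑ c : Fin 3 → Fin 2, ∑ r : Fin 3 → Fin 2, ∏ m,
              ((starRingEnd ℂ) (ψ m (c m)) * pauli (f m) (c m) (r m) * ψ m (r m)) :=
        (aux_sum_sum_prod (fun m x y => (starRingEnd ℂ) (ψ m x) * pauli (f m) x y * ψ m y)).symm
      rw [hb, hρ, Matrix.trace]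
      simp only [Matrix.diag_apply, Matrix.mul_apply, Matrix.vecMulVec_apply, Pi.star_apply,
        tensorOp]
      rw [Finset.sum_comm]
      apply Finset.sum_congr rfl; intro c _
      apply Finset.sum_congr rfl; intro r _
      rw [star_prod, ← Finset.prod_mul_distrib, ← Finset.prod_mul_distrib]
      apply Finset.prod_congr rfl; intro m _
      rw [starRingEnd_apply]
      ring
    rw [corr, htr]
    rw [Finset.prod_congr rfl fun m _ => aux_blochC_real (ψ m) (f m),
      ← Complex.ofReal_prod, Complex.ofReal_re]
  intro j k
  haveI instU : Unique {j' // j' ∈ ({j} : Finset (Fin 3))} :=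
    ⟨⟨⟨j, Finset.mem_singleton_self j⟩⟩, fun x => Subtype.ext (Finset.mem_singleton.mp x.2)⟩
  set u : ({j' // j' ∈ ({j} : Finset (Fin 3))} → Fin 3) → ℝ :=
    fun r => bloch (ψ j) (r ⟨j, Finset.mem_singleton_self j⟩) with hu_def
  set w : ({j' // j' ∉ ({j} : Finset (Fin 3))} → Fin 3) → ℝ :=
    fun c => ∏ m : {j' // j' ∉ ({j} : Finset (Fin 3))}, bloch (ψ m) (c m) with hw_def
  have hM : matricize {j} (corr ρ) = Matrix.vecMulVec u w := by
    funext r c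
    rw [matricize, Matrix.vecMulVec_apply, hcorr]
    rw [← Finset.prod_mul_prod_compl ({j} : Finset (Fin 3))]
    congr 1
    · rw [Finset.prod_singleton, dif_pos (Finset.mem_singleton_self j)]
    · rw [Finset.prod_subtype ({j} : Finset (Fin 3))ᶜ
        (fun x => Finset.mem_compl) (fun m => bloch (ψ m)
          (if h : m ∈ ({j} : Finset (Fin 3)) then r ⟨m, h⟩ else c ⟨m, h⟩))]
      apply Finset.prod_congr rfl
      intro m _
      rw [dif_neg m.2]
  rw [hM]
  apply aux_kyFan_vecMulVec_le
  have hu1 : ∑ r, u r ^ 2 = 1 := by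
    let e : ({j' // j' ∈ ({j} : Finset (Fin 3))} → Fin 3) ≃ Fin 3 :=
      { toFun := fun r => r ⟨j, Finset.mem_singleton_self j⟩
        invFun := fun i _ => i
        left_inv := fun r => funext fun m => by
          have hm : m = ⟨j, Finset.mem_singleton_self j⟩ :=
            Subtype.ext (Finset.mem_singleton.mp m.2)
          rw [hm]
        right_inv := fun i => rfl }
    rw [Fintype.sum_equiv e (fun r => u r ^ 2) (fun i => bloch (ψ j) i ^ 2)
      (fun r => by simp only [hu_def]; rfl)]
    exact aux_bloch_norm (ψ j) (hψ j)
  have hw1 : ∑ c, w c ^ 2 = 1 := by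
    have : ∀ c : ({j' // j' ∉ ({j} : Finset (Fin 3))} → Fin 3),
        w c ^ 2 = ∏ m : {j' // j' ∉ ({j} : Finset (Fin 3))}, bloch (ψ m) (c m) ^ 2 := by
      intro c
      rw [hw_def, ← Finset.prod_pow]
    rw [Finset.sum_congr rfl fun c _ => this c,
      ← Fintype.prod_sum (fun m i => bloch (ψ (m : {j' // j' ∉ ({j} : Finset (Fin 3))})) i ^ 2)]
    exact Finset.prod_eq_one fun m _ => aux_bloch_norm (ψ m) (hψ m)
  rw [hu1, hw1]
  norm_num
end
end

section
/- (Lemma 2(iii)) Let ρ be a pure 3-qubit state that is a product across the bipartition jl|m, i.e. (up to the corresponding reordering of tensor factors) ρ = |χ_{jl}⟩⟨χ_{jl}| ⊗ |φ_m⟩⟨φ_m| with χ_{jl} ∈ ℂ² ⊗ ℂ² and φ_m ∈ ℂ² unit vectors. Then the j-matricization of its full correlation tensor T_{i₁i₂i₃} = tr(ρ (σ_{i₁} ⊗ σ_{i₂} ⊗ σ_{i₃})) satisfies ‖T_{\underline{j}}‖_k ≤ k for every k ∈ {1,2,3}. -/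
open Matrix BigOperators ComplexOrder

noncomputable section

def Z1 (χ : Fin 2 × Fin 2 → ℂ) (u v : Fin 3) : ℂ :=
  ∑ a : Fin 2, ∑ b : Fin 2, ∑ a' : Fin 2, ∑ b' : Fin 2,
    (starRingEnd ℂ) (χ (a', b')) * pauli u a' a * pauli v b' b * χ (a, b)

def Z2 (φ : Fin 2 → ℂ) (w : Fin 3) : ℂ :=
  ∑ c : Fin 2, ∑ c' : Fin 2, (starRingEnd ℂ) (φ c') * pauli w c' c * φ c

lemma Z2im (φ : Fin 2 → ℂ) (w : Fin 3) : (Z2 φ w).im = 0 := by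
  fin_cases w <;>
    simp [Z2, pauli, Fin.sum_univ_two, Complex.add_im, Complex.mul_re, Complex.mul_im,
      Complex.conj_re, Complex.conj_im, Complex.I_re, Complex.I_im] <;> ring

lemma Z1re00 (χ : Fin 2 × Fin 2 → ℂ) : (Z1 χ 0 0).re = 2*(χ (0,0)).im*(χ (1,1)).im + 2*(χ (0,0)).re*(χ (1,1)).re + 2*(χ (0,1)).im*(χ (1,0)).im + 2*(χ (0,1)).re*(χ (1,0)).re := by
  simp [Z1, pauli, Fin.sum_univ_two, Complex.add_re, Complex.mul_re, Complex.mul_im,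
    Complex.conj_re, Complex.conj_im, Complex.I_re, Complex.I_im]
  ring

lemma Z1re01 (χ : Fin 2 × Fin 2 → ℂ) : (Z1 χ 0 1).re = -2*(χ (0,0)).im*(χ (1,1)).re + 2*(χ (0,0)).re*(χ (1,1)).im + 2*(χ (0,1)).im*(χ (1,0)).re - 2*(χ (0,1)).re*(χ (1,0)).im := by
  simp [Z1, pauli, Fin.sum_univ_two, Complex.add_re, Complex.mul_re, Complex.mul_im,
    Complex.conj_re, Complex.conj_im, Complex.I_re, Complex.I_im]
  ring

lemma Z1re02 (χ : Fin 2 × Fin 2 → ℂ) : (Z1 χ 0 2).re = 2*(χ (0,0)).im*(χ (1,0)).im + 2*(χ (0,0)).re*(χ (1,0)).re - 2*(χ (0,1)).im*(χ (1,1)).im - 2*(χ (0,1)).re*(χ (1,1)).re := by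
  simp [Z1, pauli, Fin.sum_univ_two, Complex.add_re, Complex.mul_re, Complex.mul_im,
    Complex.conj_re, Complex.conj_im, Complex.I_re, Complex.I_im]
  ring

lemma Z1re10 (χ : Fin 2 × Fin 2 → ℂ) : (Z1 χ 1 0).re = -2*(χ (0,0)).im*(χ (1,1)).re + 2*(χ (0,0)).re*(χ (1,1)).im - 2*(χ (0,1)).im*(χ (1,0)).re + 2*(χ (0,1)).re*(χ (1,0)).im := by
  simp [Z1, pauli, Fin.sum_univ_two, Complex.add_re, Complex.mul_re, Complex.mul_im,
    Complex.conj_re, Complex.conj_im, Complex.I_re, Complex.I_im]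
  ring

lemma Z1re11 (χ : Fin 2 × Fin 2 → ℂ) : (Z1 χ 1 1).re = -2*(χ (0,0)).im*(χ (1,1)).im - 2*(χ (0,0)).re*(χ (1,1)).re + 2*(χ (0,1)).im*(χ (1,0)).im + 2*(χ (0,1)).re*(χ (1,0)).re := by
  simp [Z1, pauli, Fin.sum_univ_two, Complex.add_re, Complex.mul_re, Complex.mul_im,
    Complex.conj_re, Complex.conj_im, Complex.I_re, Complex.I_im]
  ring

lemma Z1re12 (χ : Fin 2 × Fin 2 → ℂ) : (Z1 χ 1 2).re = -2*(χ (0,0)).im*(χ (1,0)).re + 2*(χ (0,0)).re*(χ (1,0)).im + 2*(χ (0,1)).im*(χ (1,1)).re - 2*(χ (0,1)).re*(χ (1,1)).im := by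
  simp [Z1, pauli, Fin.sum_univ_two, Complex.add_re, Complex.mul_re, Complex.mul_im,
    Complex.conj_re, Complex.conj_im, Complex.I_re, Complex.I_im]
  ring

lemma Z1re20 (χ : Fin 2 × Fin 2 → ℂ) : (Z1 χ 2 0).re = 2*(χ (0,0)).im*(χ (0,1)).im + 2*(χ (0,0)).re*(χ (0,1)).re - 2*(χ (1,0)).im*(χ (1,1)).im - 2*(χ (1,0)).re*(χ (1,1)).re := by
  simp [Z1, pauli, Fin.sum_univ_two, Complex.add_re, Complex.mul_re, Complex.mul_im,
    Complex.conj_re, Complex.conj_im, Complex.I_re, Complex.I_im]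
  ring

lemma Z1re21 (χ : Fin 2 × Fin 2 → ℂ) : (Z1 χ 2 1).re = -2*(χ (0,0)).im*(χ (0,1)).re + 2*(χ (0,0)).re*(χ (0,1)).im + 2*(χ (1,0)).im*(χ (1,1)).re - 2*(χ (1,0)).re*(χ (1,1)).im := by
  simp [Z1, pauli, Fin.sum_univ_two, Complex.add_re, Complex.mul_re, Complex.mul_im,
    Complex.conj_re, Complex.conj_im, Complex.I_re, Complex.I_im]
  ring

lemma Z1re22 (χ : Fin 2 × Fin 2 → ℂ) : (Z1 χ 2 2).re = (χ (0,0)).im*(χ (0,0)).im + (χ (0,0)).re*(χ (0,0)).re - (χ (0,1)).im*(χ (0,1)).im - (χ (0,1)).re*(χ (0,1)).re - (χ (1,0)).im*(χ (1,0)).im - (χ (1,0)).re*(χ (1,0)).re + (χ (1,1)).im*(χ (1,1)).im + (χ (1,1)).re*(χ (1,1)).re := by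
  simp [Z1, pauli, Fin.sum_univ_two, Complex.add_re, Complex.mul_re, Complex.mul_im,
    Complex.conj_re, Complex.conj_im, Complex.I_re, Complex.I_im]
  ring

lemma Z2re0 (φ : Fin 2 → ℂ) : (Z2 φ 0).re = 2*(φ 0).im*(φ 1).im + 2*(φ 0).re*(φ 1).re := by
  simp [Z2, pauli, Fin.sum_univ_two, Complex.add_re, Complex.mul_re, Complex.mul_im,
    Complex.conj_re, Complex.conj_im, Complex.I_re, Complex.I_im]
  ring

lemma Z2re1 (φ : Fin 2 → ℂ) : (Z2 φ 1).re = -2*(φ 0).im*(φ 1).re + 2*(φ 0).re*(φ 1).im := by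
  simp [Z2, pauli, Fin.sum_univ_two, Complex.add_re, Complex.mul_re, Complex.mul_im,
    Complex.conj_re, Complex.conj_im, Complex.I_re, Complex.I_im]
  ring

lemma Z2re2 (φ : Fin 2 → ℂ) : (Z2 φ 2).re = (φ 0).im*(φ 0).im + (φ 0).re*(φ 0).re - (φ 1).im*(φ 1).im - (φ 1).re*(φ 1).re := by
  simp [Z2, pauli, Fin.sum_univ_two, Complex.add_re, Complex.mul_re, Complex.mul_im,
    Complex.conj_re, Complex.conj_im, Complex.I_re, Complex.I_im]
  ring


lemma quad_bound (S00 S01 S02 S10 S11 S12 S20 S21 S22 b0 b1 b2 y0 y1 y2 : ℝ)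
    (h00 : S00*S00 + S10*S10 + S20*S20 = (1 - (b0^2+b1^2+b2^2)) + b0*b0)
    (h11 : S01*S01 + S11*S11 + S21*S21 = (1 - (b0^2+b1^2+b2^2)) + b1*b1)
    (h22 : S02*S02 + S12*S12 + S22*S22 = (1 - (b0^2+b1^2+b2^2)) + b2*b2)
    (h01 : S00*S01 + S10*S11 + S20*S21 = b0*b1)
    (h02 : S00*S02 + S10*S12 + S20*S22 = b0*b2)
    (h12 : S01*S02 + S11*S12 + S21*S22 = b1*b2) :
    (S00*y0 + S01*y1 + S02*y2)^2 + (S10*y0 + S11*y1 + S12*y2)^2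
      + (S20*y0 + S21*y1 + S22*y2)^2 ≤ y0^2 + y1^2 + y2^2 := by
  have expand : (S00*y0 + S01*y1 + S02*y2)^2 + (S10*y0 + S11*y1 + S12*y2)^2
      + (S20*y0 + S21*y1 + S22*y2)^2
      = (1 - (b0^2+b1^2+b2^2)) * (y0^2+y1^2+y2^2) + (b0*y0+b1*y1+b2*y2)^2 := by
    linear_combination y0^2 * h00 + y1^2 * h11 + y2^2 * h22 + (2*y0*y1) * h01
      + (2*y0*y2) * h02 + (2*y1*y2) * h12
  have lag : (b0^2+b1^2+b2^2) * (y0^2+y1^2+y2^2) - (b0*y0+b1*y1+b2*y2)^2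
      = (b0*y1 - b1*y0)^2 + (b0*y2 - b2*y0)^2 + (b1*y2 - b2*y1)^2 := by ring
  nlinarith [sq_nonneg (b0*y1 - b1*y0), sq_nonneg (b0*y2 - b2*y0), sq_nonneg (b1*y2 - b2*y1)]


lemma ent00 (pr pi qr qi rr ri sr si : ℝ) (hn : pr^2 + pi^2 + qr^2 + qi^2 + rr^2 + ri^2 + sr^2 + si^2 = 1) :
    (2*pi*si + 2*pr*sr + 2*qi*ri + 2*qr*rr)*(2*pi*si + 2*pr*sr + 2*qi*ri + 2*qr*rr) + (-2*pi*sr + 2*pr*si - 2*qi*rr + 2*qr*ri)*(-2*pi*sr + 2*pr*si - 2*qi*rr + 2*qr*ri) + (2*pi*qi + 2*pr*qr - 2*ri*si - 2*rr*sr)*(2*pi*qi + 2*pr*qr - 2*ri*si - 2*rr*sr) = (1 - ((2*pi*qi + 2*pr*qr + 2*ri*si + 2*rr*sr)^2+(-2*pi*qr + 2*pr*qi - 2*ri*sr + 2*rr*si)^2+(pi^2 + pr^2 - qi^2 - qr^2 + ri^2 + rr^2 - si^2 - sr^2)^2)) + (2*pi*qi + 2*pr*qr + 2*ri*si + 2*rr*sr)*(2*pi*qi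 + 2*pr*qr + 2*ri*si + 2*rr*sr) := by
  linear_combination ((pr^2 + pi^2 + qr^2 + qi^2 + rr^2 + ri^2 + sr^2 + si^2) + 1) * hn

lemma ent01 (pr pi qr qi rr ri sr si : ℝ) (hn : pr^2 + pi^2 + qr^2 + qi^2 + rr^2 + ri^2 + sr^2 + si^2 = 1) :
    (2*pi*si + 2*pr*sr + 2*qi*ri + 2*qr*rr)*(-2*pi*sr + 2*pr*si + 2*qi*rr - 2*qr*ri) + (-2*pi*sr + 2*pr*si - 2*qi*rr + 2*qr*ri)*(-2*pi*si - 2*pr*sr + 2*qi*ri + 2*qr*rr) + (2*pi*qi + 2*pr*qr - 2*ri*si - 2*rr*sr)*(-2*pi*qr + 2*pr*qi + 2*ri*sr - 2*rr*si) = (2*pi*qi + 2*pr*qr + 2*ri*si + 2*rr*sr)*(-2*pi*qr + 2*pr*qi - 2*ri*sr + 2*rr*si) := by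
  ring

lemma ent02 (pr pi qr qi rr ri sr si : ℝ) (hn : pr^2 + pi^2 + qr^2 + qi^2 + rr^2 + ri^2 + sr^2 + si^2 = 1) :
    (2*pi*si + 2*pr*sr + 2*qi*ri + 2*qr*rr)*(2*pi*ri + 2*pr*rr - 2*qi*si - 2*qr*sr) + (-2*pi*sr + 2*pr*si - 2*qi*rr + 2*qr*ri)*(-2*pi*rr + 2*pr*ri + 2*qi*sr - 2*qr*si) + (2*pi*qi + 2*pr*qr - 2*ri*si - 2*rr*sr)*(pi^2 + pr^2 - qi^2 - qr^2 - ri^2 - rr^2 + si^2 + sr^2) = (2*pi*qi + 2*pr*qr + 2*ri*si + 2*rr*sr)*(pi^2 + pr^2 - qi^2 - qr^2 + ri^2 + rr^2 - si^2 - sr^2) := by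
  ring

lemma ent11 (pr pi qr qi rr ri sr si : ℝ) (hn : pr^2 + pi^2 + qr^2 + qi^2 + rr^2 + ri^2 + sr^2 + si^2 = 1) :
    (-2*pi*sr + 2*pr*si + 2*qi*rr - 2*qr*ri)*(-2*pi*sr + 2*pr*si + 2*qi*rr - 2*qr*ri) + (-2*pi*si - 2*pr*sr + 2*qi*ri + 2*qr*rr)*(-2*pi*si - 2*pr*sr + 2*qi*ri + 2*qr*rr) + (-2*pi*qr + 2*pr*qi + 2*ri*sr - 2*rr*si)*(-2*pi*qr + 2*pr*qi + 2*ri*sr - 2*rr*si) = (1 - ((2*pi*qi + 2*pr*qr + 2*ri*si + 2*rr*sr)^2+(-2*pi*qr + 2*pr*qi - 2*ri*sr + 2*rr*si)^2+(pi^2 + pr^2 - qi^2 - qr^2 + ri^2 + rr^2 - si^2 - sr^2)^2)) + (-2*pi*qr + 2*pr*qi - 2*ri*sr + 2*rr*si)*(-2*pi*qr + 2*pr*qi - 2*ri*sr + 2*rr*si) := by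
  linear_combination ((pr^2 + pi^2 + qr^2 + qi^2 + rr^2 + ri^2 + sr^2 + si^2) + 1) * hn

lemma ent12 (pr pi qr qi rr ri sr si : ℝ) (hn : pr^2 + pi^2 + qr^2 + qi^2 + rr^2 + ri^2 + sr^2 + si^2 = 1) :
    (-2*pi*sr + 2*pr*si + 2*qi*rr - 2*qr*ri)*(2*pi*ri + 2*pr*rr - 2*qi*si - 2*qr*sr) + (-2*pi*si - 2*pr*sr + 2*qi*ri + 2*qr*rr)*(-2*pi*rr + 2*pr*ri + 2*qi*sr - 2*qr*si) + (-2*pi*qr + 2*pr*qi + 2*ri*sr - 2*rr*si)*(pi^2 + pr^2 - qi^2 - qr^2 - ri^2 - rr^2 + si^2 + sr^2) = (-2*pi*qr + 2*pr*qi - 2*ri*sr + 2*rr*si)*(pi^2 + pr^2 - qi^2 - qr^2 + ri^2 + rr^2 - si^2 - sr^2) := by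
  ring

lemma ent22 (pr pi qr qi rr ri sr si : ℝ) (hn : pr^2 + pi^2 + qr^2 + qi^2 + rr^2 + ri^2 + sr^2 + si^2 = 1) :
    (2*pi*ri + 2*pr*rr - 2*qi*si - 2*qr*sr)*(2*pi*ri + 2*pr*rr - 2*qi*si - 2*qr*sr) + (-2*pi*rr + 2*pr*ri + 2*qi*sr - 2*qr*si)*(-2*pi*rr + 2*pr*ri + 2*qi*sr - 2*qr*si) + (pi^2 + pr^2 - qi^2 - qr^2 - ri^2 - rr^2 + si^2 + sr^2)*(pi^2 + pr^2 - qi^2 - qr^2 - ri^2 - rr^2 + si^2 + sr^2) = (1 - ((2*pi*qi + 2*pr*qr + 2*ri*si + 2*rr*sr)^2+(-2*pi*qr + 2*pr*qi - 2*ri*sr + 2*rr*si)^2+(pi^2 + pr^2 - qi^2 - qr^2 + ri^2 + rr^2 - si^2 - sr^2)^2)) + (pi^2 + pr^2 - qi^2 - qr^2 + ri^2 + rr^2 - si^2 - sr^2)*(pi^2 + pr^2 - qi^2 - qr^2 + ri^2 + rr^2 - si^2 - sr^2) := by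
  linear_combination ((pr^2 + pi^2 + qr^2 + qi^2 + rr^2 + ri^2 + sr^2 + si^2) + 1) * hn


lemma entB (fr fi gr gi : ℝ) (hm : fr^2 + fi^2 + gr^2 + gi^2 = 1) :
    (2*fi*gi + 2*fr*gr)^2 + (-2*fi*gr + 2*fr*gi)^2 + (fi^2 + fr^2 - gi^2 - gr^2)^2 = 1 := by
  linear_combination (fr^2 + fi^2 + gr^2 + gi^2 + 1) * hm

lemma cs_B (B0 B1 B2 x0 x1 x2 : ℝ) (hB : B0^2 + B1^2 + B2^2 = 1) :
    (B0*x0 + B1*x1 + B2*x2)^2 ≤ x0^2 + x1^2 + x2^2 := by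
  nlinarith [sq_nonneg (B0*x1 - B1*x0), sq_nonneg (B0*x2 - B2*x0), sq_nonneg (B1*x2 - B2*x1)]

lemma singVals_le_one {I J : Type*} [Fintype I] [Fintype J] [DecidableEq I] [DecidableEq J]
    (M : Matrix I J ℝ)
    (h : ∀ x : J → ℝ, dotProduct (M *ᵥ x) (M *ᵥ x) ≤ dotProduct x x)
    (c : J) : singVals M c ≤ 1 := by
  have hH := (Matrix.posSemidef_conjTranspose_mul_self M).1
  rw [singVals, Real.sqrt_le_one]
  set v : J → ℝ := ⇑(hH.eigenvectorBasis c) with hv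
  have hv0 : v ≠ 0 := by
    intro hc
    exact hH.eigenvectorBasis.orthonormal.ne_zero c (by ext i; exact congrFun hc i)
  have heig : (Mᴴ * M) *ᵥ v = hH.eigenvalues c • v := hH.mulVec_eigenvectorBasis c
  have hvv : 0 < dotProduct v v := by
    rcases lt_or_eq_of_le (Finset.sum_nonneg fun i _ => mul_self_nonneg (v i)) with h1 | h1
    · exact h1
    · exact absurd (dotProduct_self_eq_zero.mp h1.symm) hv0
  have h1 : dotProduct v ((Mᴴ * M) *ᵥ v) = dotProduct (M *ᵥ v) (M *ᵥ v) := by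
    rw [← mulVec_mulVec, dotProduct_mulVec, conjTranspose_eq_transpose_of_trivial,
      vecMul_transpose]
  have h2 : dotProduct v ((Mᴴ * M) *ᵥ v) = hH.eigenvalues c * dotProduct v v := by
    rw [heig, dotProduct_smul, smul_eq_mul]
  have := h v
  rw [← h1, h2] at this
  nlinarith
lemma kyFanNorm_le {I J : Type*} [Fintype I] [Fintype J] [DecidableEq J]
    (k : ℕ) (M : Matrix I J ℝ) (h : ∀ c, singVals M c ≤ 1) :
    kyFanNorm k M ≤ k := by
  apply Finset.sup'_le
  intro s _
  split_ifs with hs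
  · calc ∑ j ∈ s, singVals M j ≤ ∑ _j ∈ s, (1:ℝ) := Finset.sum_le_sum fun i _ => h i
      _ = s.card := by simp
      _ = k := by rw [hs]
  · exact Nat.cast_nonneg k

lemma trace_factor (j l m : Fin 3) (hjl : j ≠ l) (hjm : j ≠ m) (hlm : l ≠ m)
    (χ : Fin 2 × Fin 2 → ℂ) (φ : Fin 2 → ℂ)
    (Ψ : (Fin 3 → Fin 2) → ℂ) (hprod : ∀ r, Ψ r = χ (r j, r l) * φ (r m))
    (f : Fin 3 → Fin 3) :
    (Matrix.vecMulVec Ψ (star Ψ) * tensorOp fun p => pauli (f p)).trace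
      = Z1 χ (f j) (f l) * Z2 φ (f m) := by
  have hcov : ∀ p : Fin 3, p = j ∨ p = l ∨ p = m := by
    have h : ∀ j l m : Fin 3, j ≠ l → j ≠ m → l ≠ m → ∀ p, p = j ∨ p = l ∨ p = m := by decide
    exact h j l m hjl hjm hlm
  have huniv : (Finset.univ : Finset (Fin 3)) = {j, l, m} := by
    ext p
    simp only [Finset.mem_univ, true_iff, Finset.mem_insert, Finset.mem_singleton]
    exact hcov p
  have hprod3 : ∀ (g : Fin 3 → ℂ), ∏ p, g p = g j * (g l * g m) := by
    intro g
    rw [huniv, Finset.prod_insert (by simp [hjl, hjm]), Finset.prod_insert (by simp [hlm]),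
      Finset.prod_singleton]
  let e : (Fin 2 × Fin 2 × Fin 2) ≃ (Fin 3 → Fin 2) :=
  { toFun := fun t p => if p = j then t.1 else if p = l then t.2.1 else t.2.2
    invFun := fun r => (r j, r l, r m)
    left_inv := fun t => by
      simp [Ne.symm hjl, Ne.symm hjm, Ne.symm hlm]
    right_inv := fun r => by
      funext p
      rcases hcov p with rfl | rfl | rfl
      · simp
      · simp [Ne.symm hjl]
      · simp [Ne.symm hjm, Ne.symm hlm] }
  have he1 : ∀ t : Fin 2 × Fin 2 × Fin 2, e t j = t.1 := fun t => if_pos rfl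
  have he2 : ∀ t : Fin 2 × Fin 2 × Fin 2, e t l = t.2.1 := fun t => by
    simp [e, Ne.symm hjl]
  have he3 : ∀ t : Fin 2 × Fin 2 × Fin 2, e t m = t.2.2 := fun t => by
    simp [e, Ne.symm hjm, Ne.symm hlm]
  rw [Matrix.trace]
  simp only [Matrix.diag_apply, Matrix.mul_apply, Matrix.vecMulVec_apply, tensorOp,
    Pi.star_apply, hprod, hprod3]
  simp only [← Equiv.sum_comp e]
  simp only [he1, he2, he3, star_mul', Complex.star_def]
  rw [Z1, Z2]
  simp only [Fintype.sum_prod_type, Fin.sum_univ_two, Finset.sum_mul, Finset.mul_sum]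
  ring

/-- Lemma 2(iii): If a pure 3-qubit state is a product across the
bipartition `{j,l} | {m}` (for pairwise distinct `j, l, m`, covering all such
bipartitions up to reordering of factors), then the `j`-matricization of its
full correlation tensor satisfies `‖T_{j̲}‖_k ≤ k` for every `k ∈ {1,2,3}`. -/
theorem two_vs_one_product_three_qubit_matricization_bound
    (j l m : Fin 3) (hjl : j ≠ l) (hjm : j ≠ m) (hlm : l ≠ m)
    (χ : Fin 2 × Fin 2 → ℂ) (φ : Fin 2 → ℂ)
    (hχ : ∑ x, Complex.normSq (χ x) = 1)
    (hφ : ∑ x, Complex.normSq (φ x) = 1)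
    (Ψ : (Fin 3 → Fin 2) → ℂ)
    (hprod : ∀ r, Ψ r = χ (r j, r l) * φ (r m))
    (ρ : Matrix (Fin 3 → Fin 2) (Fin 3 → Fin 2) ℂ)
    (hρ : ρ = Matrix.vecMulVec Ψ (star Ψ)) :
    ∀ k : ℕ, 1 ≤ k → k ≤ 3 →
      kyFanNorm k (matricize {j} (corr ρ)) ≤ k := by
  intro k _ _
  apply kyFanNorm_le
  apply singVals_le_one
  intro x
  have hcov : ∀ p : Fin 3, p = j ∨ p = l ∨ p = m := by
    have h : ∀ j l m : Fin 3, j ≠ l → j ≠ m → l ≠ m → ∀ p, p = j ∨ p = l ∨ p = m := by decide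
    exact h j l m hjl hjm hlm
  have hjj : j ∈ ({j} : Finset (Fin 3)) := Finset.mem_singleton_self j
  have hl : l ∉ ({j} : Finset (Fin 3)) := fun h => hjl (Finset.mem_singleton.mp h).symm
  have hm : m ∉ ({j} : Finset (Fin 3)) := fun h => hjm (Finset.mem_singleton.mp h).symm
  let er : Fin 3 ≃ ({p // p ∈ ({j} : Finset (Fin 3))} → Fin 3) :=
  { toFun := fun u _ => u
    invFun := fun r => r ⟨j, hjj⟩
    left_inv := fun u => rfl
    right_inv := fun r => funext fun q => by
      have hq : q = ⟨j, hjj⟩ := Subtype.ext (Finset.mem_singleton.mp q.2)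
      rw [hq] }
  let ec : (Fin 3 × Fin 3) ≃ ({p // p ∉ ({j} : Finset (Fin 3))} → Fin 3) :=
  { toFun := fun t q => if q.1 = l then t.1 else t.2
    invFun := fun c => (c ⟨l, hl⟩, c ⟨m, hm⟩)
    left_inv := fun t => by
      simp only []
      ext
      · simp
      · simp [Ne.symm hlm]
    right_inv := fun c => funext fun q => by
      show (if (q : Fin 3) = l then c ⟨l, hl⟩ else c ⟨m, hm⟩) = c q
      rcases hcov q.1 with h | h | h
      · exact absurd (Finset.mem_singleton.mpr h) q.2
      · rw [if_pos h]; exact (congrArg c (Subtype.ext h)).symm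
      · rw [if_neg (by rw [h]; exact Ne.symm hlm)]
        exact (congrArg c (Subtype.ext h)).symm }
  have corrf : ∀ f : Fin 3 → Fin 3,
      corr ρ f = (Z1 χ (f j) (f l)).re * (Z2 φ (f m)).re := by
    intro f
    show ((ρ * tensorOp fun p => pauli (f p)).trace).re = _
    rw [hρ, trace_factor j l m hjl hjm hlm χ φ Ψ hprod f, Complex.mul_re, Z2im φ (f m),
      mul_zero, sub_zero]
  have hM : ∀ (u : Fin 3) (t : Fin 3 × Fin 3),
      matricize {j} (corr ρ) (er u) (ec t) = (Z1 χ u t.1).re * (Z2 φ t.2).re := by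
    intro u t
    have e1 : (if h : j ∈ ({j} : Finset (Fin 3)) then er u ⟨j, h⟩ else ec t ⟨j, h⟩) = u := by
      rw [dif_pos hjj]
      rfl
    have e2 : (if h : l ∈ ({j} : Finset (Fin 3)) then er u ⟨l, h⟩ else ec t ⟨l, h⟩) = t.1 := by
      rw [dif_neg hl]; simp [ec]
    have e3 : (if h : m ∈ ({j} : Finset (Fin 3)) then er u ⟨m, h⟩ else ec t ⟨m, h⟩) = t.2 := by
      rw [dif_neg hm]; simp [ec, Ne.symm hlm]
    simp only [matricize]
    rw [corrf]
    simp only [e1, e2, e3]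
  have hn : (χ (0,0)).re^2 + (χ (0,0)).im^2 + (χ (0,1)).re^2 + (χ (0,1)).im^2
      + (χ (1,0)).re^2 + (χ (1,0)).im^2 + (χ (1,1)).re^2 + (χ (1,1)).im^2 = 1 := by
    rw [← hχ]
    simp only [Fintype.sum_prod_type, Fin.sum_univ_two, Complex.normSq_apply]
    ring
  have hφ' : (φ 0).re^2 + (φ 0).im^2 + (φ 1).re^2 + (φ 1).im^2 = 1 := by
    rw [← hφ]
    simp only [Fin.sum_univ_two, Complex.normSq_apply]
    ring
  have hB : (Z2 φ 0).re^2 + (Z2 φ 1).re^2 + (Z2 φ 2).re^2 = 1 := by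
    rw [Z2re0, Z2re1, Z2re2]
    linear_combination entB (φ 0).re (φ 0).im (φ 1).re (φ 1).im hφ'
  have hquad := quad_bound ((Z1 χ 0 0).re) ((Z1 χ 0 1).re) ((Z1 χ 0 2).re)
    ((Z1 χ 1 0).re) ((Z1 χ 1 1).re) ((Z1 χ 1 2).re)
    ((Z1 χ 2 0).re) ((Z1 χ 2 1).re) ((Z1 χ 2 2).re)
    (2*(χ (0,0)).im*(χ (0,1)).im + 2*(χ (0,0)).re*(χ (0,1)).re + 2*(χ (1,0)).im*(χ (1,1)).im + 2*(χ (1,0)).re*(χ (1,1)).re)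
    (-2*(χ (0,0)).im*(χ (0,1)).re + 2*(χ (0,0)).re*(χ (0,1)).im - 2*(χ (1,0)).im*(χ (1,1)).re + 2*(χ (1,0)).re*(χ (1,1)).im)
    ((χ (0,0)).im^2 + (χ (0,0)).re^2 - (χ (0,1)).im^2 - (χ (0,1)).re^2 + (χ (1,0)).im^2 + (χ (1,0)).re^2 - (χ (1,1)).im^2 - (χ (1,1)).re^2)
    ((Z2 φ 0).re * x (ec (0, 0)) + (Z2 φ 1).re * x (ec (0, 1)) + (Z2 φ 2).re * x (ec (0, 2)))
    ((Z2 φ 0).re * x (ec (1, 0)) + (Z2 φ 1).re * x (ec (1, 1)) + (Z2 φ 2).re * x (ec (1, 2)))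
    ((Z2 φ 0).re * x (ec (2, 0)) + (Z2 φ 1).re * x (ec (2, 1)) + (Z2 φ 2).re * x (ec (2, 2)))
    (by rw [Z1re00 χ, Z1re10 χ, Z1re20 χ]; linear_combination ent00 (χ (0,0)).re (χ (0,0)).im (χ (0,1)).re (χ (0,1)).im (χ (1,0)).re (χ (1,0)).im (χ (1,1)).re (χ (1,1)).im hn)
    (by rw [Z1re01 χ, Z1re11 χ, Z1re21 χ]; linear_combination ent11 (χ (0,0)).re (χ (0,0)).im (χ (0,1)).re (χ (0,1)).im (χ (1,0)).re (χ (1,0)).im (χ (1,1)).re (χ (1,1)).im hn)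
    (by rw [Z1re02 χ, Z1re12 χ, Z1re22 χ]; linear_combination ent22 (χ (0,0)).re (χ (0,0)).im (χ (0,1)).re (χ (0,1)).im (χ (1,0)).re (χ (1,0)).im (χ (1,1)).re (χ (1,1)).im hn)
    (by rw [Z1re00 χ, Z1re01 χ, Z1re10 χ, Z1re11 χ, Z1re20 χ, Z1re21 χ]; linear_combination ent01 (χ (0,0)).re (χ (0,0)).im (χ (0,1)).re (χ (0,1)).im (χ (1,0)).re (χ (1,0)).im (χ (1,1)).re (χ (1,1)).im hn)
    (by rw [Z1re00 χ, Z1re02 χ, Z1re10 χ, Z1re12 χ, Z1re20 χ, Z1re22 χ]; linear_combination ent02 (χ (0,0)).re (χ (0,0)).im (χ (0,1)).re (χ (0,1)).im (χ (1,0)).re (χ (1,0)).im (χ (1,1)).re (χ (1,1)).im hn)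
    (by rw [Z1re01 χ, Z1re02 χ, Z1re11 χ, Z1re12 χ, Z1re21 χ, Z1re22 χ]; linear_combination ent12 (χ (0,0)).re (χ (0,0)).im (χ (0,1)).re (χ (0,1)).im (χ (1,0)).re (χ (1,0)).im (χ (1,1)).re (χ (1,1)).im hn)
  have hcs0 := cs_B ((Z2 φ 0).re) ((Z2 φ 1).re) ((Z2 φ 2).re)
    (x (ec (0, 0))) (x (ec (0, 1))) (x (ec (0, 2))) hB
  have hcs1 := cs_B ((Z2 φ 0).re) ((Z2 φ 1).re) ((Z2 φ 2).re)
    (x (ec (1, 0))) (x (ec (1, 1))) (x (ec (1, 2))) hB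
  have hcs2 := cs_B ((Z2 φ 0).re) ((Z2 φ 1).re) ((Z2 φ 2).re)
    (x (ec (2, 0))) (x (ec (2, 1))) (x (ec (2, 2))) hB
  simp only [dotProduct, Matrix.mulVec, ← Equiv.sum_comp er, ← Equiv.sum_comp ec, hM]
  simp only [Fintype.sum_prod_type, Fin.sum_univ_three]
  linarith [hquad, hcs0, hcs1, hcs2]
end
end

section
/- (Lemma 3, norm form) For every 3-qubit density matrix ρ, the full correlation tensor T_{i₁i₂i₃} = tr(ρ (σ_{i₁} ⊗ σ_{i₂} ⊗ σ_{i₃})), i_j ∈ {1,2,3}, satisfies ‖T‖ := (Σ_{i₁,i₂,i₃} T_{i₁i₂i₃}²)^{1/2} ≤ 2, and this bound is attained by the 3-qubit GHZ state (1/√2)(|000⟩ + |111⟩). -/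
open Matrix BigOperators ComplexOrder

noncomputable section

/-- The 3-qubit GHZ state vector `(1/√2)(|000⟩ + |111⟩)`. -/
def ghz : (Fin 3 → Fin 2) → ℂ :=
  fun r => if r = (fun _ => 0) then ((Real.sqrt 2 : ℝ) : ℂ)⁻¹
    else if r = (fun _ => 1) then ((Real.sqrt 2 : ℝ) : ℂ)⁻¹ else 0

/-! ### Auxiliary material -/

set_option maxHeartbeats 1000000

namespace Aux12

/-- The four Pauli matrices, including the identity. -/
def pauli4 : Fin 4 → Matrix (Fin 2) (Fin 2) ℂ :=
  ![!![1, 0; 0, 1], !![0, 1; 1, 0], !![0, -Complex.I; Complex.I, 0], !![1, 0; 0, -1]]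

lemma pauli4_succ (i : Fin 3) : pauli4 i.succ = pauli i := by
  fin_cases i <;> rfl

/-- The underlying Hilbert-space index type. -/
abbrev V := Fin 3 → Fin 2

/-- The full 3-qubit Pauli basis, including identities. -/
def T4 (f : Fin 3 → Fin 4) : Matrix V V ℂ :=
  tensorOp fun j => pauli4 (f j)

lemma pauli4_complete (a b c d : Fin 2) :
    ∑ i : Fin 4, pauli4 i a b * pauli4 i c d = if a = d ∧ b = c then 2 else 0 := by
  fin_cases a <;> fin_cases b <;> fin_cases c <;> fin_cases d <;>
    simp [pauli4, Fin.sum_univ_four] <;> norm_num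

lemma pauli4_herm (i : Fin 4) : (pauli4 i).IsHermitian := by
  fin_cases i <;>
    · ext a b
      fin_cases a <;> fin_cases b <;> simp [pauli4, Matrix.conjTranspose_apply]

/-- The sign picked up by each Pauli matrix under `σ_y (·)* σ_y`. -/
def wR : Fin 4 → ℝ := ![1, -1, -1, -1]

lemma wR_cases (i : Fin 4) : wR i = 1 ∨ wR i = -1 := by
  fin_cases i <;> simp [wR]

lemma wR_of_ne_zero {i : Fin 4} (h : i ≠ 0) : wR i = -1 := by
  fin_cases i
  · exact absurd rfl h
  all_goals rfl

lemma pauli4_conj (i : Fin 4) :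
    pauli 1 * (pauli4 i).map (starRingEnd ℂ) * pauli 1 = ((wR i : ℝ) : ℂ) • pauli4 i := by
  fin_cases i <;>
    · ext a b
      fin_cases a <;> fin_cases b <;>
        simp [pauli4, pauli, wR, Matrix.mul_apply, Fin.sum_univ_two,
          Matrix.vecMul, Matrix.map_apply, dotProduct]

/-- Sum over functions `Fin 3 → α` as a triple sum. -/
lemma sum_fin3 {α M : Type*} [AddCommMonoid M] [Fintype α] [DecidableEq α]
    (F : (Fin 3 → α) → M) :
    ∑ g : Fin 3 → α, F g = ∑ a : α, ∑ b : α, ∑ c : α, F ![a, b, c] := by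
  let e : (Fin 3 → α) ≃ α × α × α :=
    { toFun := fun g => (g 0, g 1, g 2)
      invFun := fun p => ![p.1, p.2.1, p.2.2]
      left_inv := by
        intro g; funext j; fin_cases j <;> simp
      right_inv := by intro p; simp }
  rw [← Equiv.sum_comp e.symm F]
  simp [e, Fintype.sum_prod_type]

lemma tensorOp_mul {n : ℕ} (A B : Fin n → Matrix (Fin 2) (Fin 2) ℂ) :
    tensorOp A * tensorOp B = tensorOp fun j => A j * B j := by
  ext r c
  simp only [tensorOp, Matrix.mul_apply, ← Finset.prod_mul_distrib]
  rw [Finset.prod_univ_sum]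
  rfl

lemma tensorOp_map_star {n : ℕ} (A : Fin n → Matrix (Fin 2) (Fin 2) ℂ) :
    (tensorOp A).map (starRingEnd ℂ) = tensorOp fun j => (A j).map (starRingEnd ℂ) := by
  ext r c
  simp [tensorOp, Matrix.map_apply]

lemma tensorOp_smul {n : ℕ} (s : Fin n → ℂ) (A : Fin n → Matrix (Fin 2) (Fin 2) ℂ) :
    tensorOp (fun j => s j • A j) = (∏ j, s j) • tensorOp A := by
  ext r c
  simp [tensorOp, Finset.prod_mul_distrib, Matrix.smul_apply]

lemma tensorOp_conjTranspose {n : ℕ} (A : Fin n → Matrix (Fin 2) (Fin 2) ℂ) :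
    (tensorOp A)ᴴ = tensorOp fun j => (A j)ᴴ := by
  ext r c
  simp [tensorOp, Matrix.conjTranspose_apply]

lemma T4_herm (f : Fin 3 → Fin 4) : (T4 f).IsHermitian := by
  have h : (fun j => (pauli4 (f j))ᴴ) = fun j => pauli4 (f j) :=
    funext fun j => pauli4_herm (f j)
  rw [Matrix.IsHermitian, T4, tensorOp_conjTranspose, h]

lemma trace_mul_expand {m : Type*} [Fintype m] (A B : Matrix m m ℂ) :
    (A * B).trace = ∑ p : m × m, A p.1 p.2 * B p.2 p.1 := by
  rw [Fintype.sum_prod_type]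
  simp [Matrix.trace, Matrix.mul_apply, Matrix.diag]

lemma T4_complete (a b c d : V) :
    ∑ f : Fin 3 → Fin 4, T4 f a b * T4 f c d = if a = d ∧ b = c then 8 else 0 := by
  have h1 : ∀ f : Fin 3 → Fin 4, T4 f a b * T4 f c d
      = ∏ j, (pauli4 (f j) (a j) (b j) * pauli4 (f j) (c j) (d j)) := by
    intro f; simp [T4, tensorOp, Finset.prod_mul_distrib]
  simp only [h1]
  rw [← Fintype.piFinset_univ,
    ← Finset.prod_univ_sum (fun _ => (Finset.univ : Finset (Fin 4)))
    (fun j i => pauli4 i (a j) (b j) * pauli4 i (c j) (d j))]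
  have h2 : ∀ j : Fin 3, ∑ i : Fin 4, pauli4 i (a j) (b j) * pauli4 i (c j) (d j)
      = if a j = d j ∧ b j = c j then 2 else 0 := fun j => pauli4_complete _ _ _ _
  simp only [h2]
  by_cases h : a = d ∧ b = c
  · rw [if_pos h]
    have h3 : ∀ j : Fin 3, (if a j = d j ∧ b j = c j then (2:ℂ) else 0) = 2 :=
      fun j => if_pos ⟨congrFun h.1 j, congrFun h.2 j⟩
    simp only [h3, Finset.prod_const, Finset.card_univ, Fintype.card_fin]
    norm_num
  · rw [if_neg h]
    have h4 : ∃ j, ¬(a j = d j ∧ b j = c j) := by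
      by_contra hc
      push_neg at hc
      exact h ⟨funext fun j => (hc j).1, funext fun j => (hc j).2⟩
    obtain ⟨j, hj⟩ := h4
    exact Finset.prod_eq_zero (Finset.mem_univ j) (if_neg hj)

/-- Parseval-type identity for the 3-qubit Pauli basis. -/
lemma parseval (ρ σ : Matrix V V ℂ) :
    ∑ f : Fin 3 → Fin 4, (ρ * T4 f).trace * (σ * T4 f).trace = 8 * (ρ * σ).trace := by
  calc ∑ f : Fin 3 → Fin 4, (ρ * T4 f).trace * (σ * T4 f).trace
      = ∑ f : Fin 3 → Fin 4, ∑ p : V × V, ∑ q : V × V,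
          (ρ p.1 p.2 * T4 f p.2 p.1) * (σ q.1 q.2 * T4 f q.2 q.1) := by
        simp only [trace_mul_expand, Finset.sum_mul_sum]
    _ = ∑ p : V × V, ∑ q : V × V, ρ p.1 p.2 * σ q.1 q.2 *
          ∑ f : Fin 3 → Fin 4, T4 f p.2 p.1 * T4 f q.2 q.1 := by
        rw [Finset.sum_comm]
        refine Finset.sum_congr rfl fun p _ => ?_
        rw [Finset.sum_comm]
        refine Finset.sum_congr rfl fun q _ => ?_
        rw [Finset.mul_sum]
        refine Finset.sum_congr rfl fun f _ => by ring
    _ = ∑ p : V × V, ρ p.1 p.2 * σ p.2 p.1 * 8 := by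
        refine Finset.sum_congr rfl fun p _ => ?_
        simp only [T4_complete]
        rw [Finset.sum_eq_single (p.2, p.1)]
        · simp
        · intro q _ hq
          rw [if_neg, mul_zero]
          intro ⟨h1, h2⟩
          exact hq (Prod.ext h1.symm h2.symm)
        · intro h; exact absurd (Finset.mem_univ _) h
    _ = 8 * (ρ * σ).trace := by
        rw [trace_mul_expand, Finset.mul_sum]
        exact Finset.sum_congr rfl fun p _ => by ring

/-- The trace of a product of positive semidefinite matrices is a
nonnegative real number. -/
lemma trace_mul_psd_nonneg {m : Type*} [Fintype m] [DecidableEq m]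
    {A B : Matrix m m ℂ} (hA : A.PosSemidef) (hB : B.PosSemidef) :
    0 ≤ ((A * B).trace).re ∧ ((A * B).trace).im = 0 := by
  obtain ⟨P, rfl⟩ : ∃ P : Matrix m m ℂ, A = Pᴴ * P := by
    open scoped MatrixOrder in
    exact CStarAlgebra.nonneg_iff_eq_star_mul_self.mp hA.nonneg
  obtain ⟨Q, rfl⟩ : ∃ Q : Matrix m m ℂ, B = Qᴴ * Q := by
    open scoped MatrixOrder in
    exact CStarAlgebra.nonneg_iff_eq_star_mul_self.mp hB.nonneg
  have : (Pᴴ * P * (Qᴴ * Q)).trace = ((P * Qᴴ) * (P * Qᴴ)ᴴ).trace := by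
    rw [show Pᴴ * P * (Qᴴ * Q) = Pᴴ * (P * Qᴴ * Q) by noncomm_ring,
      Matrix.trace_mul_comm,
      show P * Qᴴ * Q * Pᴴ = (P * Qᴴ) * (Q * Pᴴ) by noncomm_ring,
      Matrix.conjTranspose_mul, Matrix.conjTranspose_conjTranspose]
  rw [this]
  set M := P * Qᴴ
  have h : (M * Mᴴ).trace = ∑ i, ∑ j, M i j * star (M i j) := by
    simp [Matrix.trace, Matrix.mul_apply, Matrix.diag, Matrix.conjTranspose_apply]
  rw [h]
  constructor
  · simp only [Complex.re_sum]
    apply Finset.sum_nonneg; intro i _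
    apply Finset.sum_nonneg; intro j _
    rw [show star (M i j) = (starRingEnd ℂ) (M i j) from rfl, Complex.mul_conj,
      Complex.ofReal_re]
    exact Complex.normSq_nonneg _
  · simp only [Complex.im_sum]
    apply Finset.sum_eq_zero; intro i _
    apply Finset.sum_eq_zero; intro j _
    rw [show star (M i j) = (starRingEnd ℂ) (M i j) from rfl, Complex.mul_conj]
    simp

/-- The purity bound `tr(ρ²) ≤ 1` for a density matrix. -/
lemma trace_sq_le_one {m : Type*} [Fintype m] [DecidableEq m]
    {A : Matrix m m ℂ} (hA : A.PosSemidef) (h1 : A.trace = 1) :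
    ((A * A).trace).re ≤ 1 := by
  have hH := hA.isHermitian
  set U : Matrix m m ℂ := (Matrix.IsHermitian.eigenvectorUnitary hH : Matrix m m ℂ) with hU
  have hUU : star U * U = 1 := Unitary.coe_star_mul_self (Matrix.IsHermitian.eigenvectorUnitary hH)
  set D : Matrix m m ℂ := Matrix.diagonal (RCLike.ofReal ∘ hH.eigenvalues) with hD
  have hspec : A = U * D * star U := hH.spectral_theorem
  have htrD : A.trace = D.trace := by
    rw [hspec, Matrix.trace_mul_cycle, hUU, Matrix.one_mul]
  have htrD2 : (A * A).trace = (D * D).trace := by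
    rw [hspec]
    rw [show U * D * star U * (U * D * star U) = U * (D * (star U * U) * D) * star U by
      noncomm_ring]
    rw [hUU, Matrix.mul_one, Matrix.trace_mul_cycle, hUU, Matrix.one_mul]
  have hsum : ∑ i, hH.eigenvalues i = 1 := by
    have h2 : D.trace = A.trace := htrD.symm
    rw [h1] at h2
    have h3 : D.trace = ((∑ i, hH.eigenvalues i : ℝ) : ℂ) := by
      simp [hD, Matrix.trace_diagonal]
    rw [h3] at h2
    exact_mod_cast h2
  have hnn : ∀ i, 0 ≤ hH.eigenvalues i := hA.eigenvalues_nonneg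
  have hD2 : ((D * D).trace).re = ∑ i, (hH.eigenvalues i) ^ 2 := by
    rw [Matrix.diagonal_mul_diagonal, Matrix.trace_diagonal]
    simp [Complex.re_sum, sq]
  rw [htrD2, hD2]
  calc ∑ i, (hH.eigenvalues i) ^ 2 ≤ ∑ i, hH.eigenvalues i * ∑ j, hH.eigenvalues j := by
        apply Finset.sum_le_sum
        intro i _
        rw [sq]
        exact mul_le_mul_of_nonneg_left
          (Finset.single_le_sum (fun j _ => hnn j) (Finset.mem_univ i)) (hnn i)
    _ = 1 := by rw [← Finset.sum_mul, hsum]; ring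

lemma trace_map_star {m : Type*} [Fintype m] (A B : Matrix m m ℂ) :
    (A.map (starRingEnd ℂ) * B).trace = star ((A * B.map (starRingEnd ℂ)).trace) := by
  rw [trace_mul_expand, trace_mul_expand, star_sum]
  refine Finset.sum_congr rfl fun p _ => ?_
  simp [Matrix.map_apply, mul_comm]


/-! ### Conjugation by `σ_y ⊗ σ_y ⊗ σ_y` -/

/-- The flip operator `σ_y ⊗ σ_y ⊗ σ_y`. -/
def Fm : Matrix V V ℂ := tensorOp fun _ => pauli 1

lemma pauli1_herm : (pauli 1)ᴴ = pauli 1 := by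
  ext a b
  fin_cases a <;> fin_cases b <;> simp [pauli, Matrix.conjTranspose_apply]

lemma Fm_herm : Fmᴴ = Fm := by
  have h : (fun _ : Fin 3 => (pauli 1)ᴴ) = fun _ : Fin 3 => pauli 1 :=
    funext fun _ => pauli1_herm
  rw [Fm, tensorOp_conjTranspose, h]

lemma pauli1_map : (pauli 1).map (starRingEnd ℂ) = (-1 : ℂ) • pauli 1 := by
  ext a b
  fin_cases a <;> fin_cases b <;>
    simp [pauli, Matrix.map_apply, Matrix.smul_apply]

lemma Fm_map : Fm.map (starRingEnd ℂ) = (-1 : ℂ) • Fm := by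
  rw [Fm, tensorOp_map_star]
  have h1 : (fun _ : Fin 3 => (pauli 1).map (starRingEnd ℂ))
      = fun _ : Fin 3 => (-1 : ℂ) • pauli 1 := funext fun _ => pauli1_map
  rw [h1, tensorOp_smul]
  norm_num

lemma map_F_mul_T4_mul_F (f : Fin 3 → Fin 4) :
    (Fm * T4 f * Fm).map (starRingEnd ℂ)
      = ((∏ j, wR (f j) : ℝ) : ℂ) • T4 f := by
  rw [Matrix.map_mul, Matrix.map_mul, Fm_map]
  rw [Matrix.smul_mul, Matrix.mul_smul, Matrix.smul_mul, smul_smul]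
  rw [show ((-1 : ℂ)) * (-1) = 1 by norm_num, one_smul]
  rw [Fm, T4, tensorOp_map_star, tensorOp_mul, tensorOp_mul]
  have harg : (fun j => pauli 1 * (pauli4 (f j)).map (starRingEnd ℂ) * pauli 1)
      = fun j => ((wR (f j) : ℝ) : ℂ) • pauli4 (f j) := funext fun j => pauli4_conj (f j)
  rw [harg, tensorOp_smul]
  congr 1
  exact (Complex.ofReal_prod _ _).symm

/-- Behaviour of Pauli correlations under the antiunitary flip. -/
lemma trace_tilde (ρ : Matrix V V ℂ) (f : Fin 3 → Fin 4) :
    ((Fm * ρ.map (starRingEnd ℂ) * Fm) * T4 f).trace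
      = ((∏ j, wR (f j) : ℝ) : ℂ) * star ((ρ * T4 f).trace) := by
  rw [Matrix.mul_assoc (Fm * ρ.map (starRingEnd ℂ)) Fm (T4 f)]
  rw [Matrix.trace_mul_comm]
  rw [show (Fm * T4 f) * (Fm * ρ.map (starRingEnd ℂ))
    = (Fm * T4 f * Fm) * ρ.map (starRingEnd ℂ) by noncomm_ring]
  rw [Matrix.trace_mul_comm, trace_map_star, map_F_mul_T4_mul_F]
  rw [Matrix.mul_smul, Matrix.trace_smul, smul_eq_mul, star_mul']
  rw [show star (((∏ j, wR (f j) : ℝ) : ℂ)) = ((∏ j, wR (f j) : ℝ) : ℂ) by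
    rw [Complex.star_def, Complex.conj_ofReal]]

/-! ### The GHZ computation -/


def v0 : V := fun _ => 0
def v1 : V := fun _ => 1

lemma v0_ne_v1 : v0 ≠ v1 := by
  intro h; exact absurd (congrFun h 0) (by decide)

lemma ghz_apply_eq_zero {r : V} (h0 : r ≠ v0) (h1 : r ≠ v1) : ghz r = 0 := by
  rw [ghz, if_neg (show ¬(r = fun _ => 0) from h0), if_neg (show ¬(r = fun _ => 1) from h1)]

lemma ghz_v0 : ghz v0 = ((Real.sqrt 2 : ℝ) : ℂ)⁻¹ := by
  rw [ghz, if_pos (show v0 = fun _ => 0 from rfl)]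

lemma ghz_v1 : ghz v1 = ((Real.sqrt 2 : ℝ) : ℂ)⁻¹ := by
  rw [ghz, if_neg (show ¬(v1 = fun _ => 0) from Ne.symm v0_ne_v1),
    if_pos (show v1 = fun _ => 1 from rfl)]

lemma ghz_trace (M : Matrix V V ℂ) :
    (Matrix.vecMulVec ghz (star ghz) * M).trace
      = (M v0 v0 + M v1 v1 + M v0 v1 + M v1 v0) / 2 := by
  rw [trace_mul_expand, Fintype.sum_prod_type]
  have key : ∀ F : V → ℂ, (∀ r, r ≠ v0 → r ≠ v1 → F r = 0) →
      ∑ r : V, F r = F v0 + F v1 := by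
    intro F hF
    rw [← Finset.sum_pair v0_ne_v1]
    apply (Finset.sum_subset (Finset.subset_univ _) _).symm
    intro r _ hr
    simp only [Finset.mem_insert, Finset.mem_singleton, not_or] at hr
    exact hF r hr.1 hr.2
  rw [key _ (by
    intro r h0 h1
    apply Finset.sum_eq_zero
    intro c _
    simp [Matrix.vecMulVec_apply, ghz_apply_eq_zero h0 h1])]
  rw [key (fun c => Matrix.vecMulVec ghz (star ghz) v0 c * M c v0) (by
    intro c h0 h1
    simp [Matrix.vecMulVec_apply, Pi.star_apply, ghz_apply_eq_zero h0 h1])]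
  rw [key (fun c => Matrix.vecMulVec ghz (star ghz) v1 c * M c v1) (by
    intro c h0 h1
    simp [Matrix.vecMulVec_apply, Pi.star_apply, ghz_apply_eq_zero h0 h1])]
  have hh : ((Real.sqrt 2 : ℝ) : ℂ)⁻¹ * star ((Real.sqrt 2 : ℝ) : ℂ)⁻¹ = 1 / 2 := by
    rw [show star ((Real.sqrt 2 : ℝ) : ℂ)⁻¹ = ((Real.sqrt 2 : ℝ) : ℂ)⁻¹ by
      rw [star_inv₀, Complex.star_def, Complex.conj_ofReal]]
    rw [← mul_inv, ← Complex.ofReal_mul, Real.mul_self_sqrt (by norm_num)]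
    norm_num
  simp only [Matrix.vecMulVec_apply, Pi.star_apply, ghz_v0, ghz_v1, hh]
  ring

lemma corr_ghz (g : Fin 3 → Fin 3) :
    corr (Matrix.vecMulVec ghz (star ghz)) g =
      (((∏ j, pauli (g j) 0 0) + (∏ j, pauli (g j) 1 1) +
        (∏ j, pauli (g j) 0 1) + (∏ j, pauli (g j) 1 0)) / 2).re := by
  rw [corr, ghz_trace]
  rfl

lemma ghz_sum : ∑ i₁ : Fin 3, ∑ i₂ : Fin 3, ∑ i₃ : Fin 3,
    corr (Matrix.vecMulVec ghz (star ghz)) ![i₁, i₂, i₃] ^ 2 = 4 := by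
  simp only [Fin.sum_univ_three, corr_ghz, Fin.prod_univ_three, Matrix.cons_val_zero,
    Matrix.cons_val_one, Matrix.head_cons, Matrix.cons_val_two, Matrix.tail_cons]
  norm_num [pauli, Complex.div_re, Complex.add_re, Complex.mul_re, Complex.mul_im,
    Complex.add_im, Complex.I_re, Complex.I_im, Complex.normSq, Matrix.cons_val_two]

end Aux12

/-- Lemma 3, norm form: Every 3-qubit density matrix `ρ`
satisfies `‖T‖ ≤ 2` for the standard norm of its full correlation tensor, and
the bound is attained by the GHZ state `(1/√2)(|000⟩ + |111⟩)`. -/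
theorem three_qubit_full_correlation_norm_le_two
    (ρ : Matrix (Fin 3 → Fin 2) (Fin 3 → Fin 2) ℂ)
    (hρ : ρ.PosSemidef) (hρtr : ρ.trace = 1) :
    Real.sqrt (∑ i₁ : Fin 3, ∑ i₂ : Fin 3, ∑ i₃ : Fin 3,
        (corr ρ ![i₁, i₂, i₃]) ^ 2) ≤ 2 ∧
    Real.sqrt (∑ i₁ : Fin 3, ∑ i₂ : Fin 3, ∑ i₃ : Fin 3,
        (corr (Matrix.vecMulVec ghz (star ghz)) ![i₁, i₂, i₃]) ^ 2) = 2 := by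
  classical
  have hsqrt4 : Real.sqrt 4 = 2 := by
    rw [show (4:ℝ) = 2^2 by norm_num, Real.sqrt_sq (by norm_num : (0:ℝ) ≤ 2)]
  constructor
  · -- the upper bound
    set t : (Fin 3 → Fin 4) → ℝ := fun f => ((ρ * Aux12.T4 f).trace).re with ht
    have htreal : ∀ f, (ρ * Aux12.T4 f).trace = ((t f : ℝ) : ℂ) := by
      intro f
      have hst : (starRingEnd ℂ) ((ρ * Aux12.T4 f).trace) = (ρ * Aux12.T4 f).trace := by
        rw [show (starRingEnd ℂ) ((ρ * Aux12.T4 f).trace) = star ((ρ * Aux12.T4 f).trace)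
          from rfl, ← Matrix.trace_conjTranspose, Matrix.conjTranspose_mul,
          (Aux12.T4_herm f).eq, hρ.isHermitian.eq, Matrix.trace_mul_comm]
      exact (Complex.conj_eq_iff_re.mp hst).symm
    have hρm : ρ.map (starRingEnd ℂ) = ρᵀ := by
      ext i j
      rw [Matrix.map_apply, Matrix.transpose_apply]
      have h := congrFun (congrFun hρ.isHermitian.eq j) i
      rwa [Matrix.conjTranspose_apply] at h
    set ρt := Aux12.Fm * ρ.map (starRingEnd ℂ) * Aux12.Fm with hρt
    have hρtPSD : ρt.PosSemidef := by
      have h : (ρ.map (starRingEnd ℂ)).PosSemidef := hρm ▸ hρ.transpose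
      have h2 := h.mul_mul_conjTranspose_same Aux12.Fm
      rwa [Aux12.Fm_herm] at h2
    have hconj : ∀ f, (ρt * Aux12.T4 f).trace
        = ((∏ j, Aux12.wR (f j) : ℝ) : ℂ) * ((t f : ℝ) : ℂ) := by
      intro f
      rw [hρt, Aux12.trace_tilde, htreal f]
      rw [show star (((t f : ℝ) : ℂ)) = ((t f : ℝ) : ℂ) by
        rw [Complex.star_def, Complex.conj_ofReal]]
    -- Parseval identities
    have e1 : ((∑ f : Fin 3 → Fin 4, t f ^ 2 : ℝ) : ℂ) = 8 * (ρ * ρ).trace := by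
      rw [← Aux12.parseval ρ ρ]
      push_cast
      exact Finset.sum_congr rfl fun f _ => by rw [htreal f]; push_cast; ring
    have e1' : ∑ f : Fin 3 → Fin 4, t f ^ 2 ≤ 8 := by
      have h := congrArg Complex.re e1
      rw [Complex.ofReal_re] at h
      rw [h]
      have h2 := Aux12.trace_sq_le_one hρ hρtr
      simp only [Complex.mul_re]
      norm_num
      nlinarith
    have e2 : ((∑ f : Fin 3 → Fin 4, (∏ j, Aux12.wR (f j)) * t f ^ 2 : ℝ) : ℂ)
        = 8 * (ρ * ρt).trace := by
      rw [← Aux12.parseval ρ ρt]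
      push_cast
      exact Finset.sum_congr rfl fun f _ => by rw [htreal f, hconj f]; push_cast; ring
    have e2' : 0 ≤ ∑ f : Fin 3 → Fin 4, (∏ j, Aux12.wR (f j)) * t f ^ 2 := by
      have h := congrArg Complex.re e2
      rw [Complex.ofReal_re] at h
      rw [h]
      have h2 := (Aux12.trace_mul_psd_nonneg hρ hρtPSD).1
      simp only [Complex.mul_re]
      norm_num
      nlinarith
    have hb : ∑ f : Fin 3 → Fin 4, (1 - ∏ j, Aux12.wR (f j)) * t f ^ 2 ≤ 8 := by
      have : ∑ f : Fin 3 → Fin 4, (1 - ∏ j, Aux12.wR (f j)) * t f ^ 2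
          = (∑ f : Fin 3 → Fin 4, t f ^ 2)
            - ∑ f : Fin 3 → Fin 4, (∏ j, Aux12.wR (f j)) * t f ^ 2 := by
        rw [← Finset.sum_sub_distrib]
        exact Finset.sum_congr rfl fun f _ => by ring
      rw [this]
      linarith
    have hwpm : ∀ f : Fin 3 → Fin 4,
        (∏ j, Aux12.wR (f j)) = 1 ∨ (∏ j, Aux12.wR (f j)) = -1 := by
      intro f
      rw [Fin.prod_univ_three]
      rcases Aux12.wR_cases (f 0) with h0 | h0 <;> rcases Aux12.wR_cases (f 1) with h1 | h1 <;>
        rcases Aux12.wR_cases (f 2) with h2 | h2 <;> rw [h0, h1, h2] <;> norm_num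
    set S : Finset (Fin 3 → Fin 4) := Finset.univ.filter (fun f => ∀ j, f j ≠ 0) with hS
    have hfull : ∑ f ∈ S, t f ^ 2 * 2 ≤ 8 := by
      calc ∑ f ∈ S, t f ^ 2 * 2
          = ∑ f ∈ S, (1 - ∏ j, Aux12.wR (f j)) * t f ^ 2 := by
            refine Finset.sum_congr rfl fun f hf => ?_
            rw [hS, Finset.mem_filter] at hf
            have hprod : ∏ j, Aux12.wR (f j) = -1 := by
              rw [Fin.prod_univ_three, Aux12.wR_of_ne_zero (hf.2 0),
                Aux12.wR_of_ne_zero (hf.2 1), Aux12.wR_of_ne_zero (hf.2 2)]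
              norm_num
            rw [hprod]; ring
        _ ≤ ∑ f : Fin 3 → Fin 4, (1 - ∏ j, Aux12.wR (f j)) * t f ^ 2 := by
            apply Finset.sum_le_sum_of_subset_of_nonneg (Finset.subset_univ S)
            intro f _ _
            rcases hwpm f with h | h <;> rw [h] <;> nlinarith [sq_nonneg (t f)]
        _ ≤ 8 := hb
    have hcorr : ∀ g : Fin 3 → Fin 3, corr ρ g = t (fun j => (g j).succ) := by
      intro g
      rw [corr, ht]
      have harg : (fun j => pauli (g j)) = fun j => Aux12.pauli4 ((g j).succ) :=
        funext fun j => (Aux12.pauli4_succ (g j)).symm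
      rw [harg]
      rfl
    have htriple : ∑ i₁ : Fin 3, ∑ i₂ : Fin 3, ∑ i₃ : Fin 3, corr ρ ![i₁, i₂, i₃] ^ 2
        = ∑ f ∈ S, t f ^ 2 := by
      rw [← Aux12.sum_fin3 (fun g => corr ρ g ^ 2)]
      simp only [hcorr]
      refine Finset.sum_bij' (fun g _ => fun j => (g j).succ)
        (fun f hf => fun j => (f j).pred (by
          rw [hS, Finset.mem_filter] at hf
          exact hf.2 j)) ?_ ?_ ?_ ?_ ?_
      · intro g _
        rw [hS, Finset.mem_filter]
        exact ⟨Finset.mem_univ _, fun j => Fin.succ_ne_zero _⟩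
      · intro f _
        exact Finset.mem_univ _
      · intro g _
        funext j
        exact Fin.pred_succ _
      · intro f hf
        funext j
        exact Fin.succ_pred _ _
      · intro g _
        rfl
    have hfinal : ∑ i₁ : Fin 3, ∑ i₂ : Fin 3, ∑ i₃ : Fin 3, corr ρ ![i₁, i₂, i₃] ^ 2 ≤ 4 := by
      rw [htriple]
      have : ∑ f ∈ S, t f ^ 2 * 2 = (∑ f ∈ S, t f ^ 2) * 2 := by
        rw [Finset.sum_mul]
      linarith [hfull, this ▸ hfull]
    calc Real.sqrt (∑ i₁ : Fin 3, ∑ i₂ : Fin 3, ∑ i₃ : Fin 3, corr ρ ![i₁, i₂, i₃] ^ 2)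
        ≤ Real.sqrt 4 := Real.sqrt_le_sqrt hfinal
      _ = 2 := hsqrt4
  · rw [Aux12.ghz_sum, hsqrt4]
end
end

section
/- Let ρ be a pure 4-qubit state that is a product across the 2-versus-2 bipartition {j,l}|{m,s}, i.e. (up to the corresponding reordering of tensor factors) ρ = |χ_{jl}⟩⟨χ_{jl}| ⊗ |χ_{ms}⟩⟨χ_{ms}| with χ_{jl}, χ_{ms} ∈ ℂ² ⊗ ℂ² unit vectors. Then the matching {j,l}-matricization of the full correlation tensor T_{i₁i₂i₃i₄} = tr(ρ (σ_{i₁} ⊗ σ_{i₂} ⊗ σ_{i₃} ⊗ σ_{i₄})) satisfies ‖T_{\underline{\{j,l\}}}‖_k ≤ 3 for every k ∈ {1,…,9}. -/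
open Matrix BigOperators ComplexOrder

noncomputable section

/-! ### Auxiliary material -/

/-- The Pauli matrices together with the identity. -/
def P4 : Fin 4 → Matrix (Fin 2) (Fin 2) ℂ := ![1, pauli 0, pauli 1, pauli 2]

lemma P4_succ (i : Fin 3) : P4 i.succ = pauli i := by fin_cases i <;> rfl

lemma P4_conj (i : Fin 4) (a b : Fin 2) : (starRingEnd ℂ) (P4 i a b) = P4 i b a := by
  fin_cases i <;> fin_cases a <;> fin_cases b <;> simp [P4, pauli, Matrix.one_apply]

lemma P4_sum (a b c d : Fin 2) :
    ∑ i : Fin 4, P4 i a b * P4 i c d = if a = d ∧ b = c then 2 else 0 := by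
  fin_cases a <;> fin_cases b <;> fin_cases c <;> fin_cases d <;>
    simp [Fin.sum_univ_four, P4, pauli, Matrix.one_apply] <;> ring_nf

section Zfun

variable {ι : Type*} [Fintype ι] [DecidableEq ι]

/-- The correlation value of a multi-qubit pure state `ψ`, where the Pauli
index `0` denotes the identity. -/
def zfun (ψ : (ι → Fin 2) → ℂ) (g : ι → Fin 4) : ℂ :=
  ∑ r : ι → Fin 2, ∑ c : ι → Fin 2,
    ψ r * (starRingEnd ℂ) (ψ c) * ∏ i, P4 (g i) (c i) (r i)

lemma zfun_conj (ψ : (ι → Fin 2) → ℂ) (g : ι → Fin 4) :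
    (starRingEnd ℂ) (zfun ψ g) = zfun ψ g := by
  unfold zfun
  rw [map_sum]
  rw [Finset.sum_comm]
  refine Finset.sum_congr rfl fun r _ => ?_
  rw [map_sum]
  refine Finset.sum_congr rfl fun c _ => ?_
  rw [_root_.map_mul, _root_.map_mul, map_prod, Complex.conj_conj]
  simp only [P4_conj]
  ring

lemma zfun_zero (ψ : (ι → Fin 2) → ℂ) :
    zfun ψ (fun _ => 0) = ((∑ r, Complex.normSq (ψ r) : ℝ) : ℂ) := by
  unfold zfun
  have hP : ∀ (r c : ι → Fin 2), (∏ i, P4 0 (c i) (r i)) = if c = r then 1 else 0 := by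
    intro r c
    by_cases h : c = r
    · subst h; simp [P4]
    · rw [if_neg h]
      obtain ⟨i, hi⟩ := Function.ne_iff.mp h
      have h0 : P4 0 (c i) (r i) = 0 := by
        show (1 : Matrix (Fin 2) (Fin 2) ℂ) (c i) (r i) = 0
        rw [Matrix.one_apply, if_neg hi]
      exact Finset.prod_eq_zero (Finset.mem_univ i) h0
  push_cast
  refine Finset.sum_congr rfl fun r _ => ?_
  rw [Finset.sum_eq_single r]
  · rw [hP, if_pos rfl, mul_one, Complex.mul_conj]
  · intro c _ hc; rw [hP, if_neg hc, mul_zero]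
  · intro h; exact absurd (Finset.mem_univ r) h

lemma zfun_conj_expand (ψ : (ι → Fin 2) → ℂ) (g : ι → Fin 4) :
    (starRingEnd ℂ) (zfun ψ g) = ∑ r' : ι → Fin 2, ∑ c' : ι → Fin 2,
      (starRingEnd ℂ) (ψ r') * ψ c' * ∏ i, P4 (g i) (r' i) (c' i) := by
  unfold zfun
  rw [map_sum]
  refine Finset.sum_congr rfl fun r _ => ?_
  rw [map_sum]
  refine Finset.sum_congr rfl fun c _ => ?_
  rw [_root_.map_mul, _root_.map_mul, map_prod, Complex.conj_conj]
  simp only [P4_conj]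

lemma zfun_total (ψ : (ι → Fin 2) → ℂ) :
    ∑ g : ι → Fin 4, zfun ψ g * (starRingEnd ℂ) (zfun ψ g)
      = (2:ℂ) ^ (Fintype.card ι) * ((∑ r, Complex.normSq (ψ r) : ℝ) : ℂ) ^ 2 := by
  classical
  set n := Fintype.card ι
  set E : (ι → Fin 4) → (ι → Fin 2) → (ι → Fin 2) → (ι → Fin 2) → (ι → Fin 2) → ℂ :=
    fun g r r' c c' =>
      (ψ r * (starRingEnd ℂ) (ψ c) * ∏ i, P4 (g i) (c i) (r i)) *
      ((starRingEnd ℂ) (ψ r') * ψ c' * ∏ i, P4 (g i) (r' i) (c' i)) with hE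
  have point : ∀ g, zfun ψ g * (starRingEnd ℂ) (zfun ψ g)
      = ∑ r, ∑ r', ∑ c, ∑ c', E g r r' c c' := by
    intro g
    rw [zfun_conj_expand]
    unfold zfun
    rw [Finset.sum_mul_sum]
    refine Finset.sum_congr rfl fun r _ => Finset.sum_congr rfl fun r' _ => ?_
    rw [Finset.sum_mul_sum]
  have inner : ∀ (r r' c c' : ι → Fin 2), ∑ g : ι → Fin 4, E g r r' c c'
      = (ψ r * (starRingEnd ℂ) (ψ c) * (starRingEnd ℂ) (ψ r') * ψ c') *
        (if c = c' ∧ r = r' then (2:ℂ)^n else 0) := by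
    intro r r' c c'
    have step1 : ∀ g, E g r r' c c'
        = (ψ r * (starRingEnd ℂ) (ψ c) * (starRingEnd ℂ) (ψ r') * ψ c') *
          ∏ i, (P4 (g i) (c i) (r i) * P4 (g i) (r' i) (c' i)) := by
      intro g; rw [hE]; simp only []
      rw [Finset.prod_mul_distrib]; ring
    simp only [step1]
    rw [← Finset.mul_sum]
    congr 1
    have swap : ∑ g : ι → Fin 4, ∏ i, (P4 (g i) (c i) (r i) * P4 (g i) (r' i) (c' i))
        = ∏ i, ∑ k : Fin 4, (P4 k (c i) (r i) * P4 k (r' i) (c' i)) :=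
      (Fintype.prod_sum fun i k => P4 k (c i) (r i) * P4 k (r' i) (c' i)).symm
    rw [swap]
    simp only [P4_sum]
    by_cases h : c = c' ∧ r = r'
    · obtain ⟨h1, h2⟩ := h
      subst h1; subst h2
      simp [Finset.prod_const, n]
    · rw [if_neg h]
      rw [not_and_or] at h
      rcases h with h | h
      · obtain ⟨i, hi⟩ := Function.ne_iff.mp h
        refine Finset.prod_eq_zero (Finset.mem_univ i) ?_
        rw [if_neg]; intro hcon; exact hi hcon.1
      · obtain ⟨i, hi⟩ := Function.ne_iff.mp h
        refine Finset.prod_eq_zero (Finset.mem_univ i) ?_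
        rw [if_neg]; intro hcon; exact hi hcon.2
  calc ∑ g : ι → Fin 4, zfun ψ g * (starRingEnd ℂ) (zfun ψ g)
      = ∑ g : ι → Fin 4, ∑ r, ∑ r', ∑ c, ∑ c', E g r r' c c' :=
        Finset.sum_congr rfl fun g _ => point g
    _ = ∑ r, ∑ r', ∑ c, ∑ c', ∑ g : ι → Fin 4, E g r r' c c' := by
        rw [Finset.sum_comm]
        refine Finset.sum_congr rfl fun r _ => ?_
        rw [Finset.sum_comm]
        refine Finset.sum_congr rfl fun r' _ => ?_
        rw [Finset.sum_comm]
        refine Finset.sum_congr rfl fun c _ => ?_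
        rw [Finset.sum_comm]
    _ = ∑ r, ∑ r', ∑ c, ∑ c',
          (ψ r * (starRingEnd ℂ) (ψ c) * (starRingEnd ℂ) (ψ r') * ψ c') *
          (if c = c' ∧ r = r' then (2:ℂ)^n else 0) := by
        simp only [inner]
    _ = ∑ r, ∑ c, (ψ r * (starRingEnd ℂ) (ψ c) * (starRingEnd ℂ) (ψ r) * ψ c) * (2:ℂ)^n := by
        refine Finset.sum_congr rfl fun r _ => ?_
        rw [Finset.sum_eq_single r]
        · refine Finset.sum_congr rfl fun c _ => ?_
          rw [Finset.sum_eq_single c]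
          · rw [if_pos ⟨rfl, rfl⟩]
          · intro c' _ hc'; rw [if_neg (fun hcon => hc' hcon.1.symm), mul_zero]
          · intro h; exact absurd (Finset.mem_univ c) h
        · intro r' _ hr'
          refine Finset.sum_eq_zero fun c _ => Finset.sum_eq_zero fun c' _ => ?_
          rw [if_neg (fun hcon => hr' hcon.2.symm), mul_zero]
        · intro h; exact absurd (Finset.mem_univ r) h
    _ = ∑ r, ∑ c, ((Complex.normSq (ψ r) : ℂ) * (Complex.normSq (ψ c) : ℂ)) * (2:ℂ)^n := by
        refine Finset.sum_congr rfl fun r _ => Finset.sum_congr rfl fun c _ => ?_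
        congr 1
        calc ψ r * (starRingEnd ℂ) (ψ c) * (starRingEnd ℂ) (ψ r) * ψ c
            = (ψ r * (starRingEnd ℂ) (ψ r)) * (ψ c * (starRingEnd ℂ) (ψ c)) := by ring
          _ = (Complex.normSq (ψ r) : ℂ) * (Complex.normSq (ψ c) : ℂ) := by
              rw [Complex.mul_conj, Complex.mul_conj]
    _ = ((∑ r, (Complex.normSq (ψ r) : ℂ)) * (∑ c, (Complex.normSq (ψ c) : ℂ))) * (2:ℂ)^n := by
        rw [Finset.sum_mul_sum, Finset.sum_mul]
        exact Finset.sum_congr rfl fun r _ => by rw [Finset.sum_mul]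
    _ = (2:ℂ) ^ n * ((∑ r, Complex.normSq (ψ r) : ℝ) : ℂ) ^ 2 := by
        push_cast
        ring

lemma zfun_im (ψ : (ι → Fin 2) → ℂ) (g : ι → Fin 4) : (zfun ψ g).im = 0 :=
  Complex.conj_eq_iff_im.mp (zfun_conj ψ g)

lemma zfun_re_sq (ψ : (ι → Fin 2) → ℂ) (g : ι → Fin 4) :
    ((zfun ψ g).re)^2 = Complex.normSq (zfun ψ g) := by
  rw [Complex.normSq_apply, zfun_im, mul_zero, add_zero, pow_two]

lemma zfun_sq_bound (ψ : (ι → Fin 2) → ℂ) (hψ : ∑ x, Complex.normSq (ψ x) = 1)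
    (hcard : Fintype.card ι = 2) :
    ∑ f : ι → Fin 3, ((zfun ψ (fun i => (f i).succ)).re)^2 ≤ 3 := by
  classical
  have h4 : ∑ g : ι → Fin 4, Complex.normSq (zfun ψ g) = 4 := by
    have h := zfun_total ψ
    rw [hcard, hψ] at h
    simp only [Complex.mul_conj] at h
    have h' : ((∑ g : ι → Fin 4, Complex.normSq (zfun ψ g) : ℝ) : ℂ) = ((4:ℝ) : ℂ) := by
      push_cast
      rw [h]; norm_num
    exact_mod_cast h'
  have h0 : Complex.normSq (zfun ψ (fun _ => 0)) = 1 := by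
    rw [zfun_zero, hψ]; simp
  set e : (ι → Fin 3) → (ι → Fin 4) := fun f i => (f i).succ with he
  have himg : ∑ f : ι → Fin 3, Complex.normSq (zfun ψ (e f))
      = ∑ g ∈ Finset.image e Finset.univ, Complex.normSq (zfun ψ g) := by
    rw [Finset.sum_image]
    intro f _ f' _ h
    funext i
    exact Fin.succ_injective _ (congrFun h i)
  obtain ⟨i0⟩ : Nonempty ι := Fintype.card_pos_iff.mp (by omega)
  have h0nm : (fun _ => (0 : Fin 4)) ∉ Finset.image e Finset.univ := by
    simp only [Finset.mem_image, not_exists]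
    intro f ⟨_, hf⟩
    exact Fin.succ_ne_zero (f i0) (congrFun hf i0)
  have hsub : ∑ g ∈ insert (fun _ => (0:Fin 4)) (Finset.image e Finset.univ),
      Complex.normSq (zfun ψ g) ≤ 4 := by
    rw [← h4]
    exact Finset.sum_le_sum_of_subset_of_nonneg (Finset.subset_univ _)
      (fun g _ _ => Complex.normSq_nonneg _)
  rw [Finset.sum_insert h0nm, h0] at hsub
  calc ∑ f : ι → Fin 3, ((zfun ψ (fun i => (f i).succ)).re)^2
      = ∑ f : ι → Fin 3, Complex.normSq (zfun ψ (e f)) :=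
        Finset.sum_congr rfl fun f _ => zfun_re_sq ψ _
    _ ≤ 3 := by rw [himg]; linarith

end Zfun

lemma herm_trace_eq {J : Type*} [Fintype J] [DecidableEq J] {A : Matrix J J ℝ}
    (hA : A.IsHermitian) : A.trace = ∑ j, hA.eigenvalues j := by
  set U : Matrix J J ℝ := (Matrix.IsHermitian.eigenvectorUnitary hA : Matrix J J ℝ) with hU
  have hsU : star U * U = 1 :=
    Matrix.mem_unitaryGroup_iff'.mp (Matrix.IsHermitian.eigenvectorUnitary hA).2
  conv_lhs => rw [hA.spectral_theorem, Unitary.conjStarAlgAut_apply]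
  rw [Matrix.trace_mul_cycle, ← hU, hsU, Matrix.one_mul, Matrix.trace_diagonal]
  simp [RCLike.ofReal_real_eq_id]

lemma herm_trace_sq_eq {J : Type*} [Fintype J] [DecidableEq J] {A : Matrix J J ℝ}
    (hA : A.IsHermitian) : (A * A).trace = ∑ j, (hA.eigenvalues j) ^ 2 := by
  set U : Matrix J J ℝ := (Matrix.IsHermitian.eigenvectorUnitary hA : Matrix J J ℝ) with hU
  set D : Matrix J J ℝ := Matrix.diagonal (RCLike.ofReal ∘ hA.eigenvalues) with hD
  have hsU : star U * U = 1 :=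
    Matrix.mem_unitaryGroup_iff'.mp (Matrix.IsHermitian.eigenvectorUnitary hA).2
  have hspec : A = U * D * star U := by rw [hA.spectral_theorem, Unitary.conjStarAlgAut_apply]
  have hred : ∀ X : Matrix J J ℝ, star U * (U * X) = X := by
    intro X
    rw [← Matrix.mul_assoc, hsU, Matrix.one_mul]
  have hAA : A * A = U * (D * D) * star U := by
    rw [hspec]
    simp only [Matrix.mul_assoc]
    rw [hred]
  rw [hAA, Matrix.trace_mul_cycle, hsU, Matrix.one_mul]
  rw [hD, Matrix.diagonal_mul_diagonal, Matrix.trace_diagonal]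
  simp [RCLike.ofReal_real_eq_id, pow_two]

lemma rank_one_kyFan {I J : Type*} [Fintype I] [Fintype J] [DecidableEq J]
    (u : I → ℝ) (v : J → ℝ) (hu : ∑ i, u i ^ 2 ≤ 3) (hv : ∑ j, v j ^ 2 ≤ 3)
    (k : ℕ) : kyFanNorm k (Matrix.vecMulVec u v) ≤ 3 := by
  classical
  set M : Matrix I J ℝ := Matrix.vecMulVec u v with hM
  set hA : (Mᴴ * M).IsHermitian := (Matrix.posSemidef_conjTranspose_mul_self M).1 with hhA
  set lam : J → ℝ := hA.eigenvalues with hlam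
  have hnn : ∀ j, 0 ≤ lam j :=
    fun j => (Matrix.posSemidef_conjTranspose_mul_self M).eigenvalues_nonneg j
  set Su := ∑ i, u i ^ 2 with hSu
  set Sv := ∑ j, v j ^ 2 with hSv
  have hSu0 : 0 ≤ Su := Finset.sum_nonneg fun i _ => sq_nonneg _
  have hSv0 : 0 ≤ Sv := Finset.sum_nonneg fun j _ => sq_nonneg _
  have hApp : ∀ a b, (Mᴴ * M) a b = Su * (v a * v b) := by
    intro a b
    rw [Matrix.mul_apply]
    simp only [Matrix.conjTranspose_apply, hM, Matrix.vecMulVec_apply, star_trivial]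
    calc ∑ i, (u i * v a) * (u i * v b) = ∑ i, u i ^ 2 * (v a * v b) :=
          Finset.sum_congr rfl fun i _ => by ring
      _ = Su * (v a * v b) := by rw [← Finset.sum_mul]
  have htr : (Mᴴ * M).trace = Su * Sv := by
    rw [Matrix.trace]
    simp only [Matrix.diag_apply, hApp]
    rw [← Finset.mul_sum]
    congr 1
    exact Finset.sum_congr rfl fun a _ => by ring
  have htr2 : ((Mᴴ * M) * (Mᴴ * M)).trace = (Su * Sv) ^ 2 := by
    rw [Matrix.trace]
    simp only [Matrix.diag_apply, Matrix.mul_apply, hApp]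
    calc ∑ a, ∑ b, (Su * (v a * v b)) * (Su * (v b * v a))
        = ∑ a, (Su ^ 2 * v a ^ 2) * ∑ b, v b ^ 2 :=
          Finset.sum_congr rfl fun a _ => by
            rw [Finset.mul_sum]
            exact Finset.sum_congr rfl fun b _ => by ring
      _ = (Su * Sv) ^ 2 := by
          rw [← Finset.sum_mul, ← Finset.mul_sum]
          ring
  have heig1 : ∑ j, lam j = Su * Sv := by rw [← herm_trace_eq hA, htr]
  have heig2 : ∑ j, lam j ^ 2 = (Su * Sv) ^ 2 := by rw [← herm_trace_sq_eq hA, htr2]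
  have hcross : ∀ i ∈ (Finset.univ : Finset J), ∀ j ∈ Finset.univ.erase i,
      lam i * lam j = 0 := by
    have hexp : (∑ j, lam j) ^ 2 = ∑ i, ∑ j, lam i * lam j := by
      rw [pow_two, Finset.sum_mul_sum]
    have hsplit : ∀ i, ∑ j, lam i * lam j
        = lam i * lam i + ∑ j ∈ Finset.univ.erase i, lam i * lam j :=
      fun i => (Finset.add_sum_erase _ _ (Finset.mem_univ i)).symm
    have hoff : ∑ i, ∑ j ∈ Finset.univ.erase i, lam i * lam j = 0 := by
      have h1 : ∑ i, ∑ j, lam i * lam j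
          = ∑ i, lam i ^ 2 + ∑ i, ∑ j ∈ Finset.univ.erase i, lam i * lam j := by
        rw [← Finset.sum_add_distrib]
        exact Finset.sum_congr rfl fun i _ => by rw [hsplit i, pow_two]
      rw [← hexp, heig1, heig2] at h1
      linarith
    have h2 := (Finset.sum_eq_zero_iff_of_nonneg
      (fun i _ => Finset.sum_nonneg fun j _ => mul_nonneg (hnn i) (hnn j))).mp hoff
    intro i hi j hj
    exact (Finset.sum_eq_zero_iff_of_nonneg
      (fun j' _ => mul_nonneg (hnn i) (hnn j'))).mp (h2 i hi) j hj
  have hsumsq : (∑ j, Real.sqrt (lam j)) ^ 2 = Su * Sv := by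
    rw [pow_two, Finset.sum_mul_sum]
    calc ∑ i, ∑ j, Real.sqrt (lam i) * Real.sqrt (lam j)
        = ∑ i, lam i := by
          refine Finset.sum_congr rfl fun i _ => ?_
          rw [← Finset.add_sum_erase _ _ (Finset.mem_univ i),
            Real.mul_self_sqrt (hnn i)]
          have hz : ∑ j ∈ Finset.univ.erase i, Real.sqrt (lam i) * Real.sqrt (lam j) = 0 := by
            refine Finset.sum_eq_zero fun j hj => ?_
            rw [← Real.sqrt_mul (hnn i), hcross i (Finset.mem_univ i) j hj, Real.sqrt_zero]
          rw [hz, add_zero]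
      _ = Su * Sv := heig1
  have htot : ∑ j, Real.sqrt (lam j) ≤ 3 := by
    have h9 : Su * Sv ≤ 9 := by nlinarith
    have hpos : 0 ≤ ∑ j, Real.sqrt (lam j) :=
      Finset.sum_nonneg fun j _ => Real.sqrt_nonneg _
    nlinarith [hsumsq]
  have hsubset : ∀ s : Finset J, ∑ j ∈ s, singVals M j ≤ 3 := by
    intro s
    calc ∑ j ∈ s, singVals M j ≤ ∑ j, singVals M j :=
          Finset.sum_le_sum_of_subset_of_nonneg (Finset.subset_univ s)
            (fun j _ _ => Real.sqrt_nonneg _)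
      _ ≤ 3 := htot
  rw [kyFanNorm]
  refine Finset.sup'_le _ _ fun s _ => ?_
  split_ifs
  · exact hsubset s
  · norm_num

theorem matching_two_vs_two_product_four_qubit_matricization_bound
    (B : Finset (Fin 4)) (hB : B.card = 2)
    (χ₁ : ({i // i ∈ B} → Fin 2) → ℂ) (χ₂ : ({i // i ∉ B} → Fin 2) → ℂ)
    (hχ₁ : ∑ x, Complex.normSq (χ₁ x) = 1)
    (hχ₂ : ∑ x, Complex.normSq (χ₂ x) = 1)
    (Ψ : (Fin 4 → Fin 2) → ℂ)
    (hprod : ∀ r, Ψ r = χ₁ (fun i => r i.1) * χ₂ (fun i => r i.1))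
    (ρ : Matrix (Fin 4 → Fin 2) (Fin 4 → Fin 2) ℂ)
    (hρ : ρ = Matrix.vecMulVec Ψ (star Ψ)) :
    ∀ k : ℕ, 1 ≤ k → k ≤ 9 →
      kyFanNorm k (matricize B (corr ρ)) ≤ 3 := by
  classical
  -- merge function
  set m : ({i // i ∈ B} → Fin 2) → ({i // i ∉ B} → Fin 2) → (Fin 4 → Fin 2) :=
    fun x₁ x₂ j => if h : j ∈ B then x₁ ⟨j, h⟩ else x₂ ⟨j, h⟩ with hm
  have hm1 : ∀ x₁ x₂, (fun i : {i // i ∈ B} => m x₁ x₂ i.1) = x₁ := by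
    intro x₁ x₂; funext i; simp [hm, i.2]
  have hm2 : ∀ x₁ x₂, (fun i : {i // i ∉ B} => m x₁ x₂ i.1) = x₂ := by
    intro x₁ x₂; funext i; simp [hm, i.2]
  have hsum : ∀ (h : (Fin 4 → Fin 2) → ℂ), ∑ x, h x
      = ∑ x₁ : {i // i ∈ B} → Fin 2, ∑ x₂ : {i // i ∉ B} → Fin 2, h (m x₁ x₂) := by
    intro h
    rw [← Equiv.sum_comp (Equiv.piEquivPiSubtypeProd (fun j => j ∈ B) (fun _ => Fin 2)).symm h,
      Fintype.sum_prod_type]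
    rfl
  -- the factorization of the correlation tensor
  have key : ∀ F : Fin 4 → Fin 3, corr ρ F
      = (zfun χ₁ (fun i => (F i.1).succ)).re * (zfun χ₂ (fun i => (F i.1).succ)).re := by
    intro F
    have htrace : (ρ * tensorOp fun j => pauli (F j)).trace
        = zfun χ₁ (fun i => (F i.1).succ) * zfun χ₂ (fun i => (F i.1).succ) := by
      rw [Matrix.trace]
      have hdiag : ∀ x, (ρ * tensorOp fun j => pauli (F j)).diag x
          = ∑ y, Ψ x * (starRingEnd ℂ) (Ψ y) * ∏ j, pauli (F j) (y j) (x j) := by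
        intro x
        rw [Matrix.diag_apply, Matrix.mul_apply]
        refine Finset.sum_congr rfl fun y _ => ?_
        rw [hρ, Matrix.vecMulVec_apply, tensorOp, Pi.star_apply, starRingEnd_apply]
      simp only [hdiag]
      have hpt : ∀ x₁ x₂ y₁ y₂,
          Ψ (m x₁ x₂) * (starRingEnd ℂ) (Ψ (m y₁ y₂)) *
            ∏ j, pauli (F j) (m y₁ y₂ j) (m x₁ x₂ j)
          = (χ₁ x₁ * (starRingEnd ℂ) (χ₁ y₁) *
              ∏ i : {i // i ∈ B}, P4 ((F i.1).succ) (y₁ i) (x₁ i)) *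
            (χ₂ x₂ * (starRingEnd ℂ) (χ₂ y₂) *
              ∏ i : {i // i ∉ B}, P4 ((F i.1).succ) (y₂ i) (x₂ i)) := by
        intro x₁ x₂ y₁ y₂
        have hΨ1 : Ψ (m x₁ x₂) = χ₁ x₁ * χ₂ x₂ := by
          rw [hprod, hm1, hm2]
        have hΨ2 : Ψ (m y₁ y₂) = χ₁ y₁ * χ₂ y₂ := by
          rw [hprod, hm1, hm2]
        have hprodsplit : ∏ j, pauli (F j) (m y₁ y₂ j) (m x₁ x₂ j)
            = (∏ i : {i // i ∈ B}, P4 ((F i.1).succ) (y₁ i) (x₁ i)) *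
              (∏ i : {i // i ∉ B}, P4 ((F i.1).succ) (y₂ i) (x₂ i)) := by
          rw [← Finset.prod_mul_prod_compl B (fun j => pauli (F j) (m y₁ y₂ j) (m x₁ x₂ j))]
          congr 1
          · rw [Finset.prod_subtype B (fun x => Iff.rfl)
              (fun j => pauli (F j) (m y₁ y₂ j) (m x₁ x₂ j))]
            refine Finset.prod_congr rfl fun i _ => ?_
            have e1 : m y₁ y₂ i.1 = y₁ i := congrFun (hm1 y₁ y₂) i
            have e2 : m x₁ x₂ i.1 = x₁ i := congrFun (hm1 x₁ x₂) i
            rw [P4_succ, e1, e2]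
          · rw [Finset.prod_subtype Bᶜ (fun x => Finset.mem_compl)
              (fun j => pauli (F j) (m y₁ y₂ j) (m x₁ x₂ j))]
            refine Finset.prod_congr rfl fun i _ => ?_
            have e1 : m y₁ y₂ i.1 = y₂ i := congrFun (hm2 y₁ y₂) i
            have e2 : m x₁ x₂ i.1 = x₂ i := congrFun (hm2 x₁ x₂) i
            rw [P4_succ, e1, e2]
        rw [hΨ1, hΨ2, hprodsplit, _root_.map_mul]
        ring
      calc ∑ x, ∑ y, Ψ x * (starRingEnd ℂ) (Ψ y) * ∏ j, pauli (F j) (y j) (x j)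
          = ∑ x₁, ∑ x₂, ∑ y, Ψ (m x₁ x₂) * (starRingEnd ℂ) (Ψ y) *
              ∏ j, pauli (F j) (y j) (m x₁ x₂ j) := hsum _
        _ = ∑ x₁, ∑ x₂, ∑ y₁, ∑ y₂, Ψ (m x₁ x₂) * (starRingEnd ℂ) (Ψ (m y₁ y₂)) *
              ∏ j, pauli (F j) (m y₁ y₂ j) (m x₁ x₂ j) :=
            Finset.sum_congr rfl fun x₁ _ => Finset.sum_congr rfl fun x₂ _ => hsum _
        _ = ∑ x₁, ∑ x₂, ∑ y₁, ∑ y₂,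
              (χ₁ x₁ * (starRingEnd ℂ) (χ₁ y₁) *
                ∏ i : {i // i ∈ B}, P4 ((F i.1).succ) (y₁ i) (x₁ i)) *
              (χ₂ x₂ * (starRingEnd ℂ) (χ₂ y₂) *
                ∏ i : {i // i ∉ B}, P4 ((F i.1).succ) (y₂ i) (x₂ i)) := by
            refine Finset.sum_congr rfl fun x₁ _ => Finset.sum_congr rfl fun x₂ _ =>
              Finset.sum_congr rfl fun y₁ _ => Finset.sum_congr rfl fun y₂ _ => ?_
            exact hpt x₁ x₂ y₁ y₂
        _ = ∑ x₁, ∑ x₂,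
              (∑ y₁, χ₁ x₁ * (starRingEnd ℂ) (χ₁ y₁) *
                ∏ i : {i // i ∈ B}, P4 ((F i.1).succ) (y₁ i) (x₁ i)) *
              (∑ y₂, χ₂ x₂ * (starRingEnd ℂ) (χ₂ y₂) *
                ∏ i : {i // i ∉ B}, P4 ((F i.1).succ) (y₂ i) (x₂ i)) :=
            Finset.sum_congr rfl fun x₁ _ => Finset.sum_congr rfl fun x₂ _ =>
              (Finset.sum_mul_sum _ _ _ _).symm
        _ = zfun χ₁ (fun i => (F i.1).succ) * zfun χ₂ (fun i => (F i.1).succ) := by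
            unfold zfun
            rw [Finset.sum_mul_sum]
    rw [corr, htrace, Complex.mul_re, zfun_im, zfun_im, mul_zero, sub_zero]
  -- matricization is rank one
  set T₁ : ({i // i ∈ B} → Fin 3) → ℝ := fun f => (zfun χ₁ (fun i => (f i).succ)).re with hT₁
  set T₂ : ({i // i ∉ B} → Fin 3) → ℝ := fun f => (zfun χ₂ (fun i => (f i).succ)).re with hT₂
  have hmat : matricize B (corr ρ) = Matrix.vecMulVec T₁ T₂ := by
    funext r c
    rw [Matrix.vecMulVec_apply]
    show corr ρ (fun j => if h : j ∈ B then r ⟨j, h⟩ else c ⟨j, h⟩) = T₁ r * T₂ c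
    rw [key]
    have h1 : (fun i : {i // i ∈ B} =>
        (if h : (i : Fin 4) ∈ B then r ⟨i, h⟩ else c ⟨i, h⟩).succ) = fun i => (r i).succ := by
      funext i; rw [dif_pos i.2]
    have h2 : (fun i : {i // i ∉ B} =>
        (if h : (i : Fin 4) ∈ B then r ⟨i, h⟩ else c ⟨i, h⟩).succ) = fun i => (c i).succ := by
      funext i; rw [dif_neg i.2]
    rw [h1, h2]
  -- cardinalities
  have hcard1 : Fintype.card {i // i ∈ B} = 2 := by
    calc Fintype.card {i // i ∈ B} = B.card := Fintype.card_coe B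
      _ = 2 := hB
  have hcard2 : Fintype.card {i // i ∉ B} = 2 := by
    calc Fintype.card {i // i ∉ B} = Fintype.card {x // x ∈ Bᶜ} :=
          Fintype.card_congr (Equiv.subtypeEquivRight fun x => (Finset.mem_compl).symm)
      _ = Bᶜ.card := Fintype.card_coe Bᶜ
      _ = 2 := by rw [Finset.card_compl, hB]; rfl
  intro k _ _
  rw [hmat]
  exact rank_one_kyFan T₁ T₂
    (by simpa using zfun_sq_bound χ₁ hχ₁ hcard1)
    (by simpa using zfun_sq_bound χ₂ hχ₂ hcard2) k
end
end
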